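/- arXiv:2504.09928 — 7 statements merged into one kernel-verified Lean document; each statement's English description precedes it below -/
import Mathlib

section
/- Let α > 0 and let f ∈ B₁(α) with logarithmic coefficients γ₁, γ₂. Then −1/√((α+1)² + 1) ≤ |γ₂| − |γ₁| ≤ 1/(α+2). -/
open Complex Metric Set

section Aux


lemma mobius_norm_le {a w : ℂ} (ha : ‖a‖ ≤ 1) (hw : ‖w‖ ≤ 1) :
    ‖w - a‖ ≤ ‖1 - (starRingEnd ℂ) a * w‖ := by
  have h1 : ‖w - a‖ ^ 2 ≤ ‖1 - (starRingEnd ℂ) a * w‖ ^ 2 := by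
    have ha2 : a.re ^ 2 + a.im ^ 2 ≤ 1 := by
      have := Complex.sq_norm a
      have h' : ‖a‖ ≤ 1 := ha
      nlinarith [Complex.normSq_apply a, norm_nonneg a]
    have hw2 : w.re ^ 2 + w.im ^ 2 ≤ 1 := by
      have := Complex.sq_norm w
      have h' : ‖w‖ ≤ 1 := hw
      nlinarith [Complex.normSq_apply w, norm_nonneg w]
    simp only [Complex.sq_norm, Complex.normSq_apply, Complex.sub_re,
      Complex.sub_im, Complex.mul_re, Complex.mul_im, Complex.one_re, Complex.one_im,
      Complex.conj_re, Complex.conj_im]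
    nlinarith [sq_nonneg (1 - (a.re^2+a.im^2)), sq_nonneg (1 - (w.re^2+w.im^2))]
  have := Real.sqrt_le_sqrt h1
  rwa [Real.sqrt_sq (norm_nonneg _), Real.sqrt_sq (norm_nonneg _)] at this

lemma schur_one {ω : ℂ → ℂ} (hd : DifferentiableOn ℂ ω (ball 0 1))
    (hm : MapsTo ω (ball 0 1) (ball 0 1)) (h0 : ω 0 = 0) :
    ‖deriv ω 0‖ ≤ 1 := by
  have hm' : MapsTo ω (ball 0 1) (ball (ω 0) 1) := by rwa [h0]
  have := Complex.norm_dslope_le_div_of_mapsTo_ball hd (hm'.mono_right ball_subset_closedBall) (mem_ball_self one_pos)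
  simpa [dslope_same] using this

lemma schur_two {ω : ℂ → ℂ} (hd : DifferentiableOn ℂ ω (ball 0 1))
    (hm : MapsTo ω (ball 0 1) (ball 0 1)) (h0 : ω 0 = 0) :
    ‖deriv (dslope ω 0) 0‖ ≤ 1 - ‖deriv ω 0‖ ^ 2 := by
  set φ : ℂ → ℂ := dslope ω 0 with hφ
  set a : ℂ := deriv ω 0 with haeq
  have hm' : MapsTo ω (ball 0 1) (ball (ω 0) 1) := by rwa [h0]
  have hφ1 : ∀ z ∈ ball (0:ℂ) 1, ‖φ z‖ ≤ 1 := fun z hz => by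
    simpa using Complex.norm_dslope_le_div_of_mapsTo_ball hd (hm'.mono_right ball_subset_closedBall) hz
  have hφa : φ 0 = a := dslope_same ω 0
  have hφd : DifferentiableOn ℂ φ (ball 0 1) :=
    (Complex.differentiableOn_dslope (ball_mem_nhds _ one_pos)).mpr hd
  have ha1 : ‖a‖ ≤ 1 := by rw [← hφa]; exact hφ1 0 (mem_ball_self one_pos)
  rcases eq_or_lt_of_le ha1 with hae | halt
  · -- |a| = 1 : equality case, ω is linear, φ constant
    have heq := Complex.affine_of_mapsTo_ball_of_exists_norm_dslope_eq_div hd (hm'.mono_right ball_subset_closedBall)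
      (mem_ball_self one_pos) (by rw [dslope_same]; simpa using hae)
    have hφconst : Set.EqOn φ (fun _ => a) (ball 0 1) := by
      intro z hz
      rcases eq_or_ne z 0 with rfl | hne
      · exact hφa
      · have hz' := heq hz
        simp only [h0, zero_add, sub_zero, smul_eq_mul, dslope_same] at hz'
        rw [hφ, dslope_of_ne _ hne, slope_def_field, hz', h0]
        field_simp
        rw [haeq]; ring
    have : deriv φ 0 = 0 := by
      have : φ =ᶠ[nhds (0:ℂ)] fun _ => a :=
        Filter.eventuallyEq_of_mem (isOpen_ball.mem_nhds (mem_ball_self one_pos)) hφconst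
      rw [this.deriv_eq, deriv_const]
    rw [this, hae]
    simp
  · -- |a| < 1 : Schwarz-Pick via Möbius
    set ψ : ℂ → ℂ := fun z => (φ z - a) / (1 - (starRingEnd ℂ) a * φ z) with hψ
    have hden : ∀ z ∈ ball (0:ℂ) 1, 1 - (starRingEnd ℂ) a * φ z ≠ 0 := by
      intro z hz
      have : ‖(starRingEnd ℂ) a * φ z‖ < 1 := by
        rw [norm_mul, RCLike.norm_conj]
        calc ‖a‖ * ‖φ z‖ ≤ ‖a‖ * 1 := by
              exact mul_le_mul_of_nonneg_left (hφ1 z hz) (norm_nonneg _)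
          _ < 1 := by simpa using halt
      intro hc
      rw [sub_eq_zero] at hc
      rw [← hc] at this
      simp at this
    have hψd : DifferentiableOn ℂ ψ (ball 0 1) :=
      ((hφd.sub (differentiableOn_const a)).div
        ((differentiableOn_const 1).sub ((differentiableOn_const _).mul hφd)) hden)
    have hψ0 : ψ 0 = 0 := by simp [hψ, hφa]
    have hψ1 : ∀ z ∈ ball (0:ℂ) 1, ‖ψ z‖ ≤ 1 := by
      intro z hz
      rw [hψ]
      simp only [norm_div]
      rcases eq_or_ne (1 - (starRingEnd ℂ) a * φ z) 0 with hc | hc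
      · exact absurd hc (hden z hz)
      · rw [div_le_one (norm_pos_iff.mpr hc)]
        exact mobius_norm_le halt.le (hφ1 z hz)
    -- deriv bound via Schwarz with radius 1+ε
    have hb : ∀ ε : ℝ, 0 < ε → ‖deriv ψ 0‖ ≤ 1 + ε := by
      intro ε hε
      have hmψ : MapsTo ψ (ball 0 1) (ball (ψ 0) (1 + ε)) := by
        intro z hz
        rw [hψ0, mem_ball_zero_iff]
        exact lt_of_le_of_lt (hψ1 z hz) (by linarith)
      simpa using Complex.norm_deriv_le_div_of_mapsTo_ball hψd (hmψ.mono_right ball_subset_closedBall) one_pos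
    have hψle : ‖deriv ψ 0‖ ≤ 1 := le_of_forall_pos_le_add fun ε hε => hb ε hε
    -- compute deriv ψ 0
    have hφat : DifferentiableAt ℂ φ 0 :=
      (hφd.differentiableAt (isOpen_ball.mem_nhds (mem_ball_self one_pos)))
    have hden0 : (1 : ℂ) - (starRingEnd ℂ) a * a ≠ 0 := by
      have := hden 0 (mem_ball_self one_pos); rwa [hφa] at this
    have hdψ : deriv ψ 0 = deriv φ 0 / (1 - (starRingEnd ℂ) a * a) := by
      have h1 : HasDerivAt (fun z => φ z - a) (deriv φ 0) 0 := hφat.hasDerivAt.sub_const a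
      have h2 : HasDerivAt (fun z => 1 - (starRingEnd ℂ) a * φ z)
          (-((starRingEnd ℂ) a * deriv φ 0)) 0 := by
        simpa using ((hφat.hasDerivAt.const_mul ((starRingEnd ℂ) a)).const_sub 1)
      have h3 := h1.div h2 (by simpa [hφa] using hden0)
      rw [(show HasDerivAt ψ _ 0 from h3).deriv]
      simp only [hφa]
      field_simp
      ring
    rw [hdψ] at hψle
    rw [norm_div] at hψle
    have hnorm : ‖(1:ℂ) - (starRingEnd ℂ) a * a‖ = 1 - ‖a‖ ^ 2 := by
      have : (starRingEnd ℂ) a * a = ((‖a‖ ^ 2 : ℝ) : ℂ) := by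
        rw [mul_comm, Complex.mul_conj]
        simp [Complex.normSq_eq_norm_sq]
      rw [this, ← Complex.ofReal_one, ← Complex.ofReal_sub, Complex.norm_real,
        Real.norm_eq_abs, _root_.abs_of_nonneg (by nlinarith [norm_nonneg a])]
    rw [hnorm] at hψle
    have hpos : (0:ℝ) < 1 - ‖a‖ ^ 2 := by nlinarith [norm_nonneg a]
    rw [div_le_one hpos] at hψle
    simpa using hψle

lemma deriv_deriv_eq_two_dslope {ω : ℂ → ℂ} (hω : AnalyticAt ℂ ω 0) (h0 : ω 0 = 0) :
    deriv (deriv ω) 0 = 2 * deriv (dslope ω 0) 0 := by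
  obtain ⟨pw, hpw⟩ := hω
  set φ : ℂ → ℂ := dslope ω 0 with hφdef
  have hφa : AnalyticAt ℂ φ 0 := ⟨pw.fslope, hpw.has_fpower_series_dslope_fslope⟩
  have hωeq : ω = fun w => w * φ w := by
    funext w
    have := sub_smul_dslope ω 0 w
    simp only [sub_zero, smul_eq_mul, h0] at this
    rw [← this]
  have hφd' : AnalyticAt ℂ (deriv φ) 0 := by
    obtain ⟨t, ht, hto, ht0⟩ := _root_.eventually_nhds_iff.mp hφa.eventually_analyticAt
    have han : AnalyticOnNhd ℂ φ t := fun x hx => ht x hx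
    exact han.deriv 0 ht0
  have hev : deriv ω =ᶠ[nhds (0:ℂ)] fun z => φ z + z * deriv φ z := by
    filter_upwards [hφa.eventually_analyticAt] with z hz
    have h1 : HasDerivAt (fun w => w * φ w) (1 * φ z + z * deriv φ z) z :=
      (hasDerivAt_id z).mul hz.differentiableAt.hasDerivAt
    rw [hωeq, h1.deriv]
    ring
  rw [hev.deriv_eq]
  have h2 : HasDerivAt (fun z => φ z + z * deriv φ z)
      (deriv φ 0 + (1 * deriv φ 0 + 0 * deriv (deriv φ) 0)) 0 :=
    (hφa.differentiableAt.hasDerivAt).add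
      ((hasDerivAt_id 0).mul hφd'.differentiableAt.hasDerivAt)
  rw [h2.deriv]
  ring

end Aux


/-- The Bazilevič class `B₁(α)`: `f` is analytic on the unit disk with `f 0 = 0`,
`f' 0 = 1`, and `Re[(f z / z)^(α-1) * f' z] > 0` on the disk, where the power is taken
with the analytic branch equal to `1` at `z = 0`.  The branch is encoded via an analytic
function `h` with `h 0 = 0` and `f z = z * exp (h z)` on the disk (so that
`h = log (f z / z)` and `(f z / z)^(α-1) = exp ((α-1) * h z)`). -/
def BazilevicB1 (α : ℝ) (f h : ℂ → ℂ) : Prop :=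
  AnalyticOnNhd ℂ f (ball 0 1) ∧ AnalyticOnNhd ℂ h (ball 0 1) ∧
  f 0 = 0 ∧ deriv f 0 = 1 ∧ h 0 = 0 ∧
  (∀ z ∈ ball (0 : ℂ) 1, f z = z * Complex.exp (h z)) ∧
  (∀ z ∈ ball (0 : ℂ) 1, 0 < (Complex.exp ((α - 1 : ℂ) * h z) * deriv f z).re)

/-- The first logarithmic coefficient `γ₁`, from `h = log (f z / z) = 2 ∑ γₙ zⁿ`. -/
noncomputable def logCoeff1 (h : ℂ → ℂ) : ℂ := deriv h 0 / 2

/-- The second logarithmic coefficient `γ₂`, from `h = log (f z / z) = 2 ∑ γₙ zⁿ`. -/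
noncomputable def logCoeff2 (h : ℂ → ℂ) : ℂ := iteratedDeriv 2 h 0 / 4

/-- The second Taylor coefficient `a₂` of `f`. -/
noncomputable def coeff2 (f : ℂ → ℂ) : ℂ := iteratedDeriv 2 f 0 / 2

/-- The third Taylor coefficient `a₃` of `f`. -/
noncomputable def coeff3 (f : ℂ → ℂ) : ℂ := iteratedDeriv 3 f 0 / 6


/-- For `α > 0` and `f ∈ B₁(α)` with logarithmic coefficients `γ₁, γ₂`:
`-1/√((α+1)² + 1) ≤ |γ₂| - |γ₁| ≤ 1/(α+2)`. -/
theorem stmt_0 (α : ℝ) (hα : 0 < α) (f h : ℂ → ℂ) (hf : BazilevicB1 α f h) :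
    -1 / Real.sqrt ((α + 1) ^ 2 + 1) ≤
      ‖logCoeff2 h‖ - ‖logCoeff1 h‖ ∧
    ‖logCoeff2 h‖ - ‖logCoeff1 h‖ ≤ 1 / (α + 2) := by
  obtain ⟨hfa, hha, hf0, hdf0, hh0, hfe, hpos⟩ := hf
  set g : ℂ → ℂ := deriv h with hgdef
  have hga : AnalyticOnNhd ℂ g (ball 0 1) := hha.deriv
  have hg2a : AnalyticOnNhd ℂ (deriv g) (ball 0 1) := hga.deriv
  set A : ℂ := deriv h 0 with hAdef
  set B : ℂ := deriv g 0 with hBdef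
  have h0b : (0:ℂ) ∈ ball (0:ℂ) 1 := mem_ball_self one_pos
  set p : ℂ → ℂ := fun z => Complex.exp ((α:ℂ) * h z) * (1 + z * g z) with hpdef
  -- derivative of f on the ball
  have hdf : ∀ z ∈ ball (0:ℂ) 1, deriv f z = Complex.exp (h z) * (1 + z * g z) := by
    intro z hz
    have hev : f =ᶠ[nhds z] fun w => w * Complex.exp (h w) :=
      Filter.eventuallyEq_of_mem (isOpen_ball.mem_nhds hz) hfe
    rw [hev.deriv_eq]
    have h1 : HasDerivAt (fun w => w * Complex.exp (h w))
        (1 * Complex.exp (h z) + z * (Complex.exp (h z) * g z)) z :=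
      (hasDerivAt_id z).mul ((hha z hz).differentiableAt.hasDerivAt.cexp)
    rw [h1.deriv]
    ring
  -- p is a Carathéodory function
  have hppos : ∀ z ∈ ball (0:ℂ) 1, 0 < (p z).re := by
    intro z hz
    have hp := hpos z hz
    rw [hdf z hz, ← mul_assoc, ← Complex.exp_add] at hp
    have He : ((α:ℂ) - 1) * h z + h z = (α:ℂ) * h z := by ring
    rwa [He] at hp
  have hp0 : p 0 = 1 := by simp [hpdef, hh0]
  have hpa : AnalyticOnNhd ℂ p (ball 0 1) := fun z hz =>
    ((analyticAt_const.mul (hha z hz)).cexp).mul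
      (analyticAt_const.add ((analyticAt_id).mul (hga z hz)))
  have hpden : ∀ z ∈ ball (0:ℂ) 1, p z + 1 ≠ 0 := by
    intro z hz hc
    have : (p z + 1).re = (p z).re + 1 := by simp
    rw [hc] at this
    have := hppos z hz
    simp at *
    linarith
  set ω : ℂ → ℂ := fun z => (p z - 1) / (p z + 1) with hωdef
  have hωa : AnalyticOnNhd ℂ ω (ball 0 1) :=
    (hpa.sub analyticOnNhd_const).div (hpa.add analyticOnNhd_const) hpden
  have hω0 : ω 0 = 0 := by simp [hωdef, hp0]
  have hωm : MapsTo ω (ball 0 1) (ball 0 1) := by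
    intro z hz
    rw [mem_ball_zero_iff, hωdef]
    have h1 : ‖p z - 1‖ < ‖p z + 1‖ := by
      rw [Complex.norm_def, Complex.norm_def]
      apply Real.sqrt_lt_sqrt (Complex.normSq_nonneg _)
      have := hppos z hz
      simp only [Complex.normSq_apply, Complex.add_re, Complex.add_im, Complex.sub_re,
        Complex.sub_im, Complex.one_re, Complex.one_im]
      nlinarith
    have h2 : 0 < ‖p z + 1‖ := by
      rw [norm_pos_iff]
      exact hpden z hz
    simp only [norm_div]
    rw [div_lt_one h2]
    exact h1
  have hωd : DifferentiableOn ℂ ω (ball 0 1) := hωa.differentiableOn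
  -- first two derivatives of p at 0
  set q : ℂ → ℂ := fun z => Complex.exp ((α:ℂ) * h z) * ((α:ℂ) * g z) * (1 + z * g z)
      + Complex.exp ((α:ℂ) * h z) * (g z + z * deriv g z) with hqdef
  have hpd : ∀ z ∈ ball (0:ℂ) 1, HasDerivAt p (q z) z := by
    intro z hz
    have hh' : HasDerivAt h (g z) z := (hha z hz).differentiableAt.hasDerivAt
    have hg' : HasDerivAt g (deriv g z) z := (hga z hz).differentiableAt.hasDerivAt
    have h1 : HasDerivAt (fun w => Complex.exp ((α:ℂ) * h w))
        (Complex.exp ((α:ℂ) * h z) * ((α:ℂ) * g z)) z := (hh'.const_mul (α:ℂ)).cexp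
    have h2 : HasDerivAt (fun w => 1 + w * g w) (1 * g z + z * deriv g z) z :=
      ((hasDerivAt_id z).mul hg').const_add 1
    have h3 := h1.mul h2
    have : Complex.exp ((α:ℂ) * h z) * ((α:ℂ) * g z) * (1 + z * g z)
        + Complex.exp ((α:ℂ) * h z) * (1 * g z + z * deriv g z) = q z := by
      rw [hqdef]; ring
    rw [← this]
    exact h3
  have hq0 : q 0 = ((α:ℂ) + 1) * A := by
    simp [hqdef, hh0, ← hAdef]
    ring
  -- derivative of q at 0
  have hh'0 : HasDerivAt h A 0 := (hha 0 h0b).differentiableAt.hasDerivAt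
  have hg'0 : HasDerivAt g B 0 := (hga 0 h0b).differentiableAt.hasDerivAt
  have hg2'0 : HasDerivAt (deriv g) (deriv (deriv g) 0) 0 :=
    (hg2a 0 h0b).differentiableAt.hasDerivAt
  have hE : HasDerivAt (fun w => Complex.exp ((α:ℂ) * h w))
      (Complex.exp ((α:ℂ) * h 0) * ((α:ℂ) * A)) 0 := (hh'0.const_mul (α:ℂ)).cexp
  have hq' : HasDerivAt q
      ((Complex.exp ((α:ℂ) * h 0) * ((α:ℂ) * A) * ((α:ℂ) * g 0)
          + Complex.exp ((α:ℂ) * h 0) * ((α:ℂ) * B)) * (1 + 0 * g 0)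
        + Complex.exp ((α:ℂ) * h 0) * ((α:ℂ) * g 0) * (1 * g 0 + 0 * B)
        + (Complex.exp ((α:ℂ) * h 0) * ((α:ℂ) * A) * (g 0 + 0 * deriv g 0)
          + Complex.exp ((α:ℂ) * h 0) * (B + (1 * deriv g 0 + 0 * deriv (deriv g) 0)))) 0 := by
    have t1 : HasDerivAt (fun w => Complex.exp ((α:ℂ) * h w) * ((α:ℂ) * g w))
        (Complex.exp ((α:ℂ) * h 0) * ((α:ℂ) * A) * ((α:ℂ) * g 0)
          + Complex.exp ((α:ℂ) * h 0) * ((α:ℂ) * B)) 0 :=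
      hE.mul (hg'0.const_mul (α:ℂ))
    have t2 : HasDerivAt (fun w => 1 + w * g w) (1 * g 0 + 0 * B) 0 :=
      ((hasDerivAt_id 0).mul hg'0).const_add 1
    have t3 := t1.mul t2
    have t4 : HasDerivAt (fun w => g w + w * deriv g w)
        (B + (1 * deriv g 0 + 0 * deriv (deriv g) 0)) 0 :=
      hg'0.add ((hasDerivAt_id 0).mul hg2'0)
    have t5 := hE.mul t4
    exact t3.add t5
  have hq'0 : deriv q 0 = ((α:ℂ) + 2) * (B + (α:ℂ) * A ^ 2) := by
    rw [hq'.deriv]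
    have hg0A : g 0 = A := rfl
    simp [hh0, hg0A]
    ring
  -- derivatives of ω at 0
  set r : ℂ → ℂ := fun z => (q z * (p z + 1) - (p z - 1) * q z) / (p z + 1) ^ 2 with hrdef
  have hωd' : ∀ z ∈ ball (0:ℂ) 1, HasDerivAt ω (r z) z := by
    intro z hz
    exact ((hpd z hz).sub_const 1).div ((hpd z hz).add_const 1) (hpden z hz)
  have hdω0 : deriv ω 0 = ((α:ℂ) + 1) * A / 2 := by
    rw [(hωd' 0 h0b).deriv, hrdef]
    simp only [hp0, hq0]
    ring_nf
  have hrev : deriv ω =ᶠ[nhds (0:ℂ)] r :=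
    Filter.eventuallyEq_of_mem (isOpen_ball.mem_nhds h0b) (fun z hz => (hωd' z hz).deriv)
  have hq'd : HasDerivAt q (deriv q 0) 0 := hq'.deriv ▸ hq'
  have hp'd : HasDerivAt p (q 0) 0 := hpd 0 h0b
  have hr' : HasDerivAt r
      (((deriv q 0 * (p 0 + 1) + q 0 * q 0 - (q 0 * q 0 + (p 0 - 1) * deriv q 0)) * (p 0 + 1) ^ 2
        - (q 0 * (p 0 + 1) - (p 0 - 1) * q 0) * (2 * (p 0 + 1) ^ 1 * q 0)) / ((p 0 + 1) ^ 2) ^ 2) 0 := by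
    have num : HasDerivAt (fun z => q z * (p z + 1) - (p z - 1) * q z)
        (deriv q 0 * (p 0 + 1) + q 0 * q 0 - (q 0 * q 0 + (p 0 - 1) * deriv q 0)) 0 := by
      have n1 := hq'd.mul (hp'd.add_const 1)
      have n2 := (hp'd.sub_const 1).mul hq'd
      exact n1.sub n2
    have den : HasDerivAt (fun z => (p z + 1) ^ 2) (2 * (p 0 + 1) ^ 1 * q 0) 0 := by
      have := (hp'd.add_const 1).fun_pow 2
      simpa using this
    exact num.div den (by rw [hp0]; norm_num)
  have hddω : deriv (deriv ω) 0 = deriv q 0 / 2 - q 0 ^ 2 / 2 := by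
    rw [hrev.deriv_eq, hr'.deriv, hp0]
    ring
  -- dslope values
  have hωa0 : AnalyticAt ℂ ω 0 := hωa 0 h0b
  have hb : deriv (dslope ω 0) 0 = ((α:ℂ) + 2) * (B + (α:ℂ) * A ^ 2) / 4 - ((α:ℂ) + 1) ^ 2 * A ^ 2 / 4 := by
    have := deriv_deriv_eq_two_dslope hωa0 hω0
    rw [hddω, hq'0, hq0] at this
    field_simp at this ⊢
    linear_combination (-1 : ℂ) * this
  -- Schur inequalities
  have hx1 : ‖deriv ω 0‖ ≤ 1 := schur_one hωd hωm hω0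
  have hy1 : ‖deriv (dslope ω 0) 0‖ ≤ 1 - ‖deriv ω 0‖ ^ 2 := schur_two hωd hωm hω0
  -- relate to logarithmic coefficients
  set γ1 : ℂ := logCoeff1 h with hγ1def
  set γ2 : ℂ := logCoeff2 h with hγ2def
  have hγ1A : γ1 = A / 2 := rfl
  have hγ2B : γ2 = B / 4 := by
    rw [hγ2def, logCoeff2]
    congr 2
    rw [show (2:ℕ) = 1 + 1 from rfl, iteratedDeriv_succ, iteratedDeriv_one]
  have ha : deriv ω 0 = ((α:ℂ) + 1) * γ1 := by rw [hdω0, hγ1A]; ring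
  have hceq : ((α:ℂ) + 2) * γ2 = deriv (dslope ω 0) 0 + γ1 ^ 2 := by
    rw [hb, hγ1A, hγ2B]; ring
  set X : ℝ := ‖γ1‖ with hXdef
  set Y : ℝ := ‖γ2‖ with hYdef
  set y : ℝ := ‖deriv (dslope ω 0) 0‖ with hydef
  have hcast1 : ((α:ℂ) + 1) = ((α + 1 : ℝ) : ℂ) := by push_cast; ring
  have hcast2 : ((α:ℂ) + 2) = ((α + 2 : ℝ) : ℂ) := by push_cast; ring
  have hXx : ‖deriv ω 0‖ = (α + 1) * X := by
    rw [ha, norm_mul, hcast1, Complex.norm_real, Real.norm_eq_abs,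
      _root_.abs_of_pos (by linarith)]
  have hup : (α + 2) * Y ≤ y + X ^ 2 := by
    have h1 : ‖((α:ℂ) + 2) * γ2‖ = (α + 2) * Y := by
      rw [norm_mul, hcast2, Complex.norm_real, Real.norm_eq_abs,
        _root_.abs_of_pos (by linarith)]
    rw [← h1, hceq]
    calc ‖deriv (dslope ω 0) 0 + γ1 ^ 2‖ ≤ ‖deriv (dslope ω 0) 0‖ + ‖γ1 ^ 2‖ := norm_add_le _ _
      _ = y + X ^ 2 := by rw [norm_pow]
  have hlow : X ^ 2 - y ≤ (α + 2) * Y := by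
    have h1 : ‖((α:ℂ) + 2) * γ2‖ = (α + 2) * Y := by
      rw [norm_mul, hcast2, Complex.norm_real, Real.norm_eq_abs,
        _root_.abs_of_pos (by linarith)]
    have h2 : γ1 ^ 2 = ((α:ℂ) + 2) * γ2 - deriv (dslope ω 0) 0 := by rw [hceq]; ring
    have h3 : X ^ 2 ≤ (α + 2) * Y + y := by
      calc X ^ 2 = ‖γ1 ^ 2‖ := (norm_pow _ _).symm
        _ = ‖((α:ℂ) + 2) * γ2 - deriv (dslope ω 0) 0‖ := by rw [h2]
        _ ≤ ‖((α:ℂ) + 2) * γ2‖ + ‖deriv (dslope ω 0) 0‖ := norm_sub_le _ _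
        _ = (α + 2) * Y + y := by rw [h1]
    linarith
  rw [hXx] at hx1 hy1
  have hy0 : 0 ≤ y := norm_nonneg _
  have hX0 : 0 ≤ X := norm_nonneg _
  have hY0 : 0 ≤ Y := norm_nonneg _
  -- final real inequalities
  set s : ℝ := Real.sqrt ((α + 1) ^ 2 + 1) with hsdef
  have hs2 : s ^ 2 = (α + 1) ^ 2 + 1 := Real.sq_sqrt (by positivity)
  have hs0 : 0 < s := Real.sqrt_pos.mpr (by positivity)
  have hst : α + 1 ≤ s := by
    nlinarith [hs2, hs0]
  clear_value X Y y s
  clear hb hceq ha hγ2B hγ1A hγ1def hγ2def hXx hddω hr' hq'd hp'd hrev hdω0 hωd' hrdef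
    hq'0 hq' hE hg2'0 hg'0 hh'0 hq0 hpd hqdef hωd hωm hω0 hωa hωdef hpden hpa hp0 hppos
    hdf hpdef hcast1 hcast2 hydef hXdef hYdef hωa0 hfe hpos hf0 hdf0 hh0 hga hg2a hha hfa
    hgdef hAdef hBdef hsdef h0b
  clear γ1 γ2 r q ω p B A g f h
  constructor
  · -- lower bound
    by_cases hcase : X * s ≤ 1
    · have hX : X ≤ 1 / s := (le_div_iff₀ hs0).mpr hcase
      rw [neg_div]
      linarith
    · push_neg at hcase
      have h1 : s ^ 2 * X ^ 2 - 1 ≤ (α + 2) * Y := by nlinarith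
      have h2 : (α + 2) * (X - 1 / s) ≤ s ^ 2 * X ^ 2 - 1 := by
        have he : X - 1 / s = (X * s - 1) / s := by field_simp
        rw [he, ← mul_div_assoc, div_le_iff₀ hs0]
        nlinarith [mul_nonneg (sub_nonneg.mpr hcase.le)
          (by nlinarith : (0:ℝ) ≤ s * (X * s + 1) - (α + 2))]
      have h3 : X - 1 / s ≤ Y := by
        have := h2.trans h1
        have hα2 : (0:ℝ) < α + 2 := by linarith
        exact le_of_mul_le_mul_left this hα2
      rw [neg_div]
      linarith
  · -- upper bound
    have hY : Y ≤ 1 / (α + 2) := by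
      rw [le_div_iff₀ (by linarith : (0:ℝ) < α + 2)]
      nlinarith [mul_nonneg (sq_nonneg X) (mul_nonneg hα.le (by linarith : (0:ℝ) ≤ α + 2))]
    linarith
end

section
/- Let α > 0 and let f ∈ B₁(α) with logarithmic coefficients γ₁, γ₂. Then |γ₂| − |γ₁| ≤ 1/(α+2). -/
open Complex Metric
open Filter Topology

private lemma analyticAt_deriv' {f : ℂ → ℂ} {x : ℂ} (hf : AnalyticAt ℂ f x) :
    AnalyticAt ℂ (deriv f) x := by
  obtain ⟨s, hs, hfs⟩ := hf.exists_mem_nhds_analyticOnNhd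
  exact hfs.deriv x (mem_of_mem_nhds hs)

private lemma schwarz_pick_center {φ : ℂ → ℂ}
    (hd : DifferentiableOn ℂ φ (ball 0 1))
    (hb : ∀ z ∈ ball (0:ℂ) 1, ‖φ z‖ ≤ 1) :
    ‖deriv φ 0‖ ≤ 1 - ‖φ 0‖ ^ 2 := by
  have h0 : (0:ℂ) ∈ ball (0:ℂ) 1 := mem_ball_self one_pos
  have ha : ‖φ 0‖ ≤ 1 := hb 0 h0
  rcases ha.lt_or_eq with hA | hA
  · -- |φ 0| < 1 : Möbius transform
    set a : ℂ := φ 0 with ha_def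
    set ψ : ℂ → ℂ := fun z => (φ z - a) / (1 - (starRingEnd ℂ) a * φ z) with hψ_def
    have hna : Complex.normSq a < 1 := by
      rw [← Complex.sq_norm]; nlinarith [norm_nonneg (φ 0)]
    have hden : ∀ z ∈ ball (0:ℂ) 1, (1:ℂ) - (starRingEnd ℂ) a * φ z ≠ 0 := by
      intro z hz hcon
      have h1 : (starRingEnd ℂ) a * φ z = 1 := by
        have := sub_eq_zero.mp hcon; exact this.symm
      have h2 : ‖a‖ * ‖φ z‖ = 1 := by
        have := congrArg (‖·‖) h1
        simpa [norm_mul, Complex.norm_conj] using this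
      nlinarith [hb z hz, norm_nonneg (φ z), norm_nonneg a]
    have key : ∀ u : ℂ, ‖u‖ ≤ 1 →
        ‖u - a‖ ≤ ‖1 - (starRingEnd ℂ) a * u‖ := by
      intro u hu
      have hnu : Complex.normSq u ≤ 1 := by
        rw [← Complex.sq_norm]; nlinarith [norm_nonneg u]
      rw [Complex.norm_def, Complex.norm_def]
      apply Real.sqrt_le_sqrt
      simp only [Complex.normSq_apply, Complex.sub_re, Complex.sub_im, Complex.mul_re,
        Complex.mul_im, Complex.conj_re, Complex.conj_im, Complex.one_re, Complex.one_im,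
        Complex.normSq_apply] at hnu hna ⊢
      nlinarith [hnu, hna]
    have hψd : DifferentiableOn ℂ ψ (ball 0 1) := by
      apply DifferentiableOn.div (hd.sub (differentiableOn_const a))
        ((differentiableOn_const 1).sub ((differentiableOn_const _).mul hd)) hden
    have hψ0 : ψ 0 = 0 := by simp [hψ_def, ← ha_def]
    have hψb : ∀ z ∈ ball (0:ℂ) 1, ‖ψ z‖ ≤ 1 := by
      intro z hz
      rw [hψ_def]
      simp only [norm_div]
      exact div_le_one_of_le₀ (key _ (hb z hz)) (norm_nonneg _)
    have hder : ∀ ε : ℝ, 0 < ε → ‖deriv ψ 0‖ ≤ 1 + ε := by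
      intro ε hε
      have hmaps : Set.MapsTo ψ (ball 0 1) (ball (ψ 0) (1 + ε)) := by
        intro z hz
        rw [hψ0, mem_ball, dist_zero_right]
        calc ‖ψ z‖ ≤ 1 := hψb z hz
        _ < 1 + ε := by linarith
      simpa using Complex.norm_deriv_le_div_of_mapsTo_ball hψd (hmaps.mono_right ball_subset_closedBall) one_pos
    have hder1 : ‖deriv ψ 0‖ ≤ 1 := by
      by_contra hcon
      push_neg at hcon
      have := hder ((‖deriv ψ 0‖ - 1)/2) (by linarith)
      linarith
    -- compute deriv ψ 0
    have hφ0d : DifferentiableAt ℂ φ 0 := (hd 0 h0).differentiableAt (isOpen_ball.mem_nhds h0)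
    have hN : HasDerivAt (fun z => φ z - a) (deriv φ 0) 0 := hφ0d.hasDerivAt.sub_const a
    have hD : HasDerivAt (fun z => (1:ℂ) - (starRingEnd ℂ) a * φ z)
        (0 - (starRingEnd ℂ) a * deriv φ 0) 0 :=
      (hasDerivAt_const 0 (1:ℂ)).sub (hφ0d.hasDerivAt.const_mul _)
    have hD0 : (1:ℂ) - (starRingEnd ℂ) a * φ 0 ≠ 0 := hden 0 h0
    have hψder : HasDerivAt ψ
        ((deriv φ 0 * ((1:ℂ) - (starRingEnd ℂ) a * φ 0) -
          (φ 0 - a) * (0 - (starRingEnd ℂ) a * deriv φ 0)) /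
          ((1:ℂ) - (starRingEnd ℂ) a * φ 0) ^ 2) 0 := hN.div hD hD0
    have hsimp : (1:ℂ) - (starRingEnd ℂ) a * φ 0 = ((1 - Complex.normSq a : ℝ) : ℂ) := by
      rw [← ha_def]
      have : (starRingEnd ℂ) a * a = (Complex.normSq a : ℂ) := by
        rw [mul_comm, Complex.mul_conj]
      push_cast
      rw [this]
    have hval : deriv ψ 0 = deriv φ 0 / ((1 - Complex.normSq a : ℝ) : ℂ) := by
      rw [hψder.deriv, hsimp, ← ha_def, sub_self, zero_mul, sub_zero, sq]
      rw [mul_div_assoc]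
      congr 1
      rw [mul_comm]
      have hne : ((1 - Complex.normSq a : ℝ) : ℂ) ≠ 0 := by rw [← hsimp]; exact hD0
      field_simp
    have habs : ‖deriv φ 0‖ / (1 - Complex.normSq a) ≤ 1 := by
      have := hder1
      rw [hval, norm_div, Complex.norm_real, Real.norm_eq_abs, abs_of_pos (by linarith : (0:ℝ) < 1 - Complex.normSq a)] at this
      exact this
    have : ‖deriv φ 0‖ ≤ 1 - Complex.normSq a := by
      rw [div_le_one (by linarith)] at habs
      exact habs
    calc ‖deriv φ 0‖ ≤ 1 - Complex.normSq a := this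
    _ = 1 - ‖φ 0‖ ^ 2 := by rw [Complex.sq_norm, ha_def]
  · -- |φ 0| = 1 : maximum modulus, φ locally constant
    have hloc : IsLocalMax (norm ∘ φ) 0 := by
      filter_upwards [isOpen_ball.mem_nhds h0] with z hz
      simp only [Function.comp_apply]
      rw [hA]
      exact hb z hz
    have hdz : ∀ᶠ z in 𝓝 (0:ℂ), DifferentiableAt ℂ φ z := by
      filter_upwards [isOpen_ball.mem_nhds h0] with z hz
      exact (hd z hz).differentiableAt (isOpen_ball.mem_nhds hz)
    have hev : ∀ᶠ y in 𝓝 (0:ℂ), φ y = φ 0 := Complex.eventually_eq_of_isLocalMax_norm hdz hloc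
    have hder0 : deriv φ 0 = 0 := by
      have h1 : deriv φ 0 = deriv (fun _ : ℂ => φ 0) 0 := Filter.EventuallyEq.deriv_eq hev
      simpa using h1
    rw [hder0, hA]
    simp

private lemma cara {g : ℂ → ℂ} (hg : AnalyticOnNhd ℂ g (ball 0 1)) (hg0 : g 0 = 1)
    (hre : ∀ z ∈ ball (0:ℂ) 1, 0 < (g z).re) :
    ‖deriv g 0‖ ≤ 2 ∧ ‖deriv (deriv g) 0‖ ≤ 4 := by
  have h0 : (0:ℂ) ∈ ball (0:ℂ) 1 := mem_ball_self one_pos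
  have hne : ∀ z ∈ ball (0:ℂ) 1, g z + 1 ≠ 0 := by
    intro z hz hcon
    have : (g z + 1).re = 0 := by rw [hcon]; simp
    simp only [Complex.add_re, Complex.one_re] at this
    nlinarith [hre z hz]
  set w : ℂ → ℂ := fun z => (g z - 1) / (g z + 1) with hw_def
  have hw_an : AnalyticOnNhd ℂ w (ball 0 1) :=
    (hg.sub analyticOnNhd_const).div (hg.add analyticOnNhd_const) hne
  have hwd : DifferentiableOn ℂ w (ball 0 1) := hw_an.differentiableOn
  have hw0 : w 0 = 0 := by simp [hw_def, hg0]
  have hwlt : ∀ z ∈ ball (0:ℂ) 1, ‖w z‖ < 1 := by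
    intro z hz
    rw [hw_def]
    simp only [norm_div]
    rw [div_lt_one (norm_pos_iff.mpr (hne z hz))]
    rw [Complex.norm_def, Complex.norm_def]
    apply Real.sqrt_lt_sqrt (Complex.normSq_nonneg _)
    simp only [Complex.normSq_apply, Complex.sub_re, Complex.sub_im, Complex.add_re,
      Complex.add_im, Complex.one_re, Complex.one_im]
    nlinarith [hre z hz]
  have hmaps : Set.MapsTo w (ball 0 1) (ball (w 0) 1) := by
    intro z hz
    rw [hw0, mem_ball, dist_zero_right]
    exact hwlt z hz
  set φ : ℂ → ℂ := dslope w 0 with hφ_def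
  have hφd : DifferentiableOn ℂ φ (ball 0 1) :=
    (differentiableOn_dslope (ball_mem_nhds 0 one_pos)).mpr hwd
  have hφb : ∀ z ∈ ball (0:ℂ) 1, ‖φ z‖ ≤ 1 := by
    intro z hz
    simpa using Complex.norm_dslope_le_div_of_mapsTo_ball hwd (hmaps.mono_right ball_subset_closedBall) hz
  have hSP : ‖deriv φ 0‖ ≤ 1 - ‖φ 0‖ ^ 2 :=
    schwarz_pick_center hφd hφb
  have hφ0 : φ 0 = deriv w 0 := dslope_same w 0
  -- w z = z * φ z for all z
  have hwz : ∀ z : ℂ, w z = z * φ z := by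
    intro z
    have := sub_smul_dslope w 0 z
    simpa [hw0, smul_eq_mul] using this.symm
  -- analyticity of φ at 0 and differentiability of deriv φ at 0
  obtain ⟨p, hp⟩ := hw_an 0 h0
  have hφan : AnalyticAt ℂ φ 0 := ⟨p.fslope, hp.has_fpower_series_dslope_fslope⟩
  have hdφ0 : DifferentiableAt ℂ (deriv φ) 0 := (analyticAt_deriv' hφan).differentiableAt
  have hφ0d : DifferentiableAt ℂ φ 0 := hφan.differentiableAt
  -- deriv w on the ball via φ
  have hwder_φ : ∀ z ∈ ball (0:ℂ) 1, deriv w z = φ z + z * deriv φ z := by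
    intro z hz
    have hφz : DifferentiableAt ℂ φ z := (hφd z hz).differentiableAt (isOpen_ball.mem_nhds hz)
    have h1 : HasDerivAt (fun y => y * φ y) (1 * φ z + z * deriv φ z) z :=
      (hasDerivAt_id z).mul hφz.hasDerivAt
    have h2 : w = fun y => y * φ y := funext hwz
    rw [h2, h1.deriv]; ring
  -- second derivative of w at 0 via φ
  have hq2φ : deriv (deriv w) 0 = 2 * deriv φ 0 := by
    have hev : deriv w =ᶠ[𝓝 (0:ℂ)] fun z => φ z + z * deriv φ z :=
      Filter.eventuallyEq_of_mem (isOpen_ball.mem_nhds h0) hwder_φ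
    rw [hev.deriv_eq]
    have h1 : HasDerivAt (fun z : ℂ => φ z + z * deriv φ z)
        (deriv φ 0 + (1 * deriv φ 0 + 0 * deriv (deriv φ) 0)) 0 :=
      hφ0d.hasDerivAt.add ((hasDerivAt_id 0).mul hdφ0.hasDerivAt)
    rw [h1.deriv]; ring
  -- deriv w on the ball via g
  have hg' : AnalyticOnNhd ℂ (deriv g) (ball 0 1) := hg.deriv
  have hwder_g : ∀ z ∈ ball (0:ℂ) 1, deriv w z =
      (deriv g z * (g z + 1) - (g z - 1) * deriv g z) / (g z + 1) ^ 2 := by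
    intro z hz
    have hgz : DifferentiableAt ℂ g z := (hg z hz).differentiableAt
    have h1 : HasDerivAt w
        ((deriv g z * (g z + 1) - (g z - 1) * deriv g z) / (g z + 1) ^ 2) z :=
      (hgz.hasDerivAt.sub_const 1).div (hgz.hasDerivAt.add_const 1) (hne z hz)
    exact h1.deriv
  set p1 : ℂ := deriv g 0 with hp1_def
  set p2 : ℂ := deriv (deriv g) 0 with hp2_def
  -- first derivative of w at 0
  have hq1 : deriv w 0 = p1 / 2 := by
    rw [hwder_g 0 h0, hg0, ← hp1_def]
    norm_num
    ring
  -- second derivative of w at 0 via g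
  have hq2g : deriv (deriv w) 0 = (p2 - p1 ^ 2) / 2 := by
    have hev : deriv w =ᶠ[𝓝 (0:ℂ)] fun z =>
        (deriv g z * (g z + 1) - (g z - 1) * deriv g z) / (g z + 1) ^ 2 :=
      Filter.eventuallyEq_of_mem (isOpen_ball.mem_nhds h0) hwder_g
    rw [hev.deriv_eq]
    have hg0d : DifferentiableAt ℂ g 0 := (hg 0 h0).differentiableAt
    have hg'0d : DifferentiableAt ℂ (deriv g) 0 := (hg' 0 h0).differentiableAt
    have hN : HasDerivAt (fun z => deriv g z * (g z + 1) - (g z - 1) * deriv g z)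
        ((deriv (deriv g) 0 * (g 0 + 1) + deriv g 0 * deriv g 0) -
         (deriv g 0 * deriv g 0 + (g 0 - 1) * deriv (deriv g) 0)) 0 :=
      (hg'0d.hasDerivAt.mul (hg0d.hasDerivAt.add_const 1)).sub
        ((hg0d.hasDerivAt.sub_const 1).mul hg'0d.hasDerivAt)
    have hD : HasDerivAt (fun z => (g z + 1) ^ 2)
        (2 * (g 0 + 1) ^ 1 * deriv g 0) 0 := by
      simpa using (hg0d.hasDerivAt.add_const 1).fun_pow 2
    have hD0 : (g 0 + 1) ^ 2 ≠ 0 := pow_ne_zero _ (hne 0 h0)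
    have h1 := hN.fun_div hD hD0
    rw [h1.deriv, hg0, ← hp1_def, ← hp2_def]
    have : ((1:ℂ) + 1) ^ 2 = 4 := by norm_num
    field_simp
    ring
  -- extract the two bounds
  have hphi0 : φ 0 = p1 / 2 := by rw [hφ0, hq1]
  have hdphi0 : deriv φ 0 = (p2 - p1 ^ 2) / 4 := by
    have h3 := hq2φ.symm.trans hq2g
    field_simp at h3 ⊢
    linear_combination h3
  constructor
  · have h2 := hφb 0 h0
    rw [hphi0, norm_div, Complex.norm_two] at h2
    linarith
  · have habs1 : ‖φ 0‖ = ‖p1‖ / 2 := by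
      rw [hphi0, norm_div, Complex.norm_two]
    have habs2 : ‖deriv φ 0‖ = ‖p2 - p1 ^ 2‖ / 4 := by
      rw [hdphi0, norm_div]
      norm_num
    have h1 : ‖p2 - p1 ^ 2‖ / 4 ≤ 1 - (‖p1‖ / 2) ^ 2 := by
      rw [← habs1, ← habs2]; exact hSP
    have h2 : ‖p2‖ ≤ ‖p2 - p1 ^ 2‖ + ‖p1‖ ^ 2 := by
      calc ‖p2‖ = ‖(p2 - p1 ^ 2) + p1 ^ 2‖ := by ring_nf
      _ ≤ ‖p2 - p1 ^ 2‖ + ‖p1 ^ 2‖ := norm_add_le _ _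
      _ = ‖p2 - p1 ^ 2‖ + ‖p1‖ ^ 2 := by rw [norm_pow]
    nlinarith [h1, h2, norm_nonneg p1]


/-- For `α > 0` and `f ∈ B₁(α)` with logarithmic coefficients `γ₁, γ₂`:
`|γ₂| - |γ₁| ≤ 1/(α+2)`. -/
theorem stmt_1 (α : ℝ) (hα : 0 < α) (f h : ℂ → ℂ) (hf : BazilevicB1 α f h) :
    ‖logCoeff2 h‖ - ‖logCoeff1 h‖ ≤ 1 / (α + 2) := by
  obtain ⟨hA, hH, hf0, hf'0, hh0, heq, hpos⟩ := hf
  have h0 : (0:ℂ) ∈ ball (0:ℂ) 1 := mem_ball_self one_pos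
  set g : ℂ → ℂ := fun z => Complex.exp ((α - 1 : ℂ) * h z) * deriv f z with hg_def
  -- analyticity of g
  have hgan : AnalyticOnNhd ℂ g (ball 0 1) :=
    (analyticOnNhd_const.mul hH).cexp.mul hA.deriv
  have hg0 : g 0 = 1 := by simp [hg_def, hh0, hf'0]
  -- derivative of h data
  have hH' : AnalyticOnNhd ℂ (deriv h) (ball 0 1) := hH.deriv
  have hH'' : AnalyticOnNhd ℂ (deriv (deriv h)) (ball 0 1) := hH'.deriv
  -- deriv f on the ball
  have hdf : ∀ z ∈ ball (0:ℂ) 1, deriv f z = Complex.exp (h z) * (1 + z * deriv h z) := by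
    intro z hz
    have hfz : f =ᶠ[𝓝 z] fun y => y * Complex.exp (h y) :=
      Filter.eventuallyEq_of_mem (isOpen_ball.mem_nhds hz) heq
    have hh : HasDerivAt h (deriv h z) z := (hH z hz).differentiableAt.hasDerivAt
    have h1 : HasDerivAt (fun y => y * Complex.exp (h y))
        (1 * Complex.exp (h z) + z * (Complex.exp (h z) * deriv h z)) z :=
      (hasDerivAt_id z).mul hh.cexp
    rw [hfz.deriv_eq, h1.deriv]; ring
  -- g on the ball equals exp(α h)·(1 + z h')
  have hgeq : ∀ z ∈ ball (0:ℂ) 1,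
      g z = Complex.exp ((α : ℂ) * h z) * (1 + z * deriv h z) := by
    intro z hz
    rw [hg_def]
    simp only
    rw [hdf z hz, ← mul_assoc, ← Complex.exp_add]
    congr 2
    ring
  -- derivative of G := exp(α h)·(1 + z h') on the ball
  have hGd : ∀ z ∈ ball (0:ℂ) 1,
      HasDerivAt (fun y => Complex.exp ((α : ℂ) * h y) * (1 + y * deriv h y))
        (Complex.exp ((α : ℂ) * h z) * ((α : ℂ) * deriv h z) * (1 + z * deriv h z) +
          Complex.exp ((α : ℂ) * h z) * (1 * deriv h z + z * deriv (deriv h) z)) z := by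
    intro z hz
    have hh : HasDerivAt h (deriv h z) z := (hH z hz).differentiableAt.hasDerivAt
    have hh' : HasDerivAt (deriv h) (deriv (deriv h) z) z :=
      (hH' z hz).differentiableAt.hasDerivAt
    have e2 : HasDerivAt (fun y => Complex.exp ((α : ℂ) * h y))
        (Complex.exp ((α : ℂ) * h z) * ((α : ℂ) * deriv h z)) z := (hh.const_mul _).cexp
    have e3 : HasDerivAt (fun y => 1 + y * deriv h y)
        (1 * deriv h z + z * deriv (deriv h) z) z :=
      ((hasDerivAt_id z).mul hh').const_add 1
    exact e2.mul e3
  -- first derivative of g at 0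
  have hp1 : deriv g 0 = ((α : ℂ) + 1) * deriv h 0 := by
    have hev : g =ᶠ[𝓝 (0:ℂ)] fun y => Complex.exp ((α : ℂ) * h y) * (1 + y * deriv h y) :=
      Filter.eventuallyEq_of_mem (isOpen_ball.mem_nhds h0) hgeq
    rw [hev.deriv_eq, (hGd 0 h0).deriv, hh0]
    simp
    ring
  -- deriv g on the ball
  have hdg : deriv g =ᶠ[𝓝 (0:ℂ)] fun z =>
      Complex.exp ((α : ℂ) * h z) * ((α : ℂ) * deriv h z) * (1 + z * deriv h z) +
        Complex.exp ((α : ℂ) * h z) * (1 * deriv h z + z * deriv (deriv h) z) := by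
    apply Filter.eventuallyEq_of_mem (isOpen_ball.mem_nhds h0)
    intro z hz
    have hev : g =ᶠ[𝓝 z] fun y => Complex.exp ((α : ℂ) * h y) * (1 + y * deriv h y) :=
      Filter.eventuallyEq_of_mem (isOpen_ball.mem_nhds hz) hgeq
    rw [hev.deriv_eq, (hGd z hz).deriv]
  -- second derivative of g at 0
  have hp2 : deriv (deriv g) 0 =
      ((α : ℂ) + 2) * deriv (deriv h) 0 + (α : ℂ) * ((α : ℂ) + 2) * (deriv h 0) ^ 2 := by
    rw [hdg.deriv_eq]
    have hh : HasDerivAt h (deriv h 0) 0 := (hH 0 h0).differentiableAt.hasDerivAt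
    have hh' : HasDerivAt (deriv h) (deriv (deriv h) 0) 0 :=
      (hH' 0 h0).differentiableAt.hasDerivAt
    have hh'' : HasDerivAt (deriv (deriv h)) (deriv (deriv (deriv h)) 0) 0 :=
      (hH'' 0 h0).differentiableAt.hasDerivAt
    have e2 : HasDerivAt (fun y => Complex.exp ((α : ℂ) * h y))
        (Complex.exp ((α : ℂ) * h 0) * ((α : ℂ) * deriv h 0)) 0 := (hh.const_mul _).cexp
    have eA : HasDerivAt (fun y => (α : ℂ) * deriv h y) ((α : ℂ) * deriv (deriv h) 0) 0 :=
      hh'.const_mul _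
    have eV : HasDerivAt (fun y => 1 + y * deriv h y)
        (1 * deriv h 0 + 0 * deriv (deriv h) 0) 0 :=
      ((hasDerivAt_id 0).mul hh').const_add 1
    have eW : HasDerivAt (fun y => 1 * deriv h y + y * deriv (deriv h) y)
        (1 * deriv (deriv h) 0 + (1 * deriv (deriv h) 0 + 0 * deriv (deriv (deriv h)) 0)) 0 :=
      (hh'.const_mul 1).add ((hasDerivAt_id 0).mul hh'')
    have htot := ((e2.fun_mul eA).fun_mul eV).fun_add (e2.fun_mul eW)
    rw [htot.deriv, hh0]
    simp
    ring
  -- apply the Carathéodory bound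
  obtain ⟨hc1, hc2⟩ := cara hgan hg0 hpos
  -- translate to real inequalities
  set d1 : ℂ := deriv h 0 with hd1_def
  set d2 : ℂ := deriv (deriv h) 0 with hd2_def
  set t : ℝ := ‖d1‖ with ht_def
  set s : ℝ := ‖d2‖ with hs_def
  have ht0 : 0 ≤ t := norm_nonneg _
  have hs0 : 0 ≤ s := norm_nonneg _
  have hb1 : (α + 1) * t ≤ 2 := by
    have : ‖deriv g 0‖ = (α + 1) * t := by
      rw [hp1, norm_mul, ht_def]
      congr 1
      have : ((α : ℂ) + 1) = ((α + 1 : ℝ) : ℂ) := by push_cast; ring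
      rw [this, Complex.norm_real, Real.norm_eq_abs, abs_of_pos (by linarith)]
    linarith [this ▸ hc1]
  have hb2 : (α + 2) * s ≤ 4 + α * (α + 2) * t ^ 2 := by
    have he : ((α : ℂ) + 2) * d2 =
        deriv (deriv g) 0 - (α : ℂ) * ((α : ℂ) + 2) * d1 ^ 2 := by
      rw [hp2]; ring
    have h1 : ‖((α : ℂ) + 2) * d2‖ ≤
        ‖deriv (deriv g) 0‖ + ‖(α : ℂ) * ((α : ℂ) + 2) * d1 ^ 2‖ := by
      rw [he]
      exact norm_sub_le _ _
    have h2 : ‖((α : ℂ) + 2) * d2‖ = (α + 2) * s := by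
      rw [norm_mul, hs_def]
      congr 1
      have : ((α : ℂ) + 2) = ((α + 2 : ℝ) : ℂ) := by push_cast; ring
      rw [this, Complex.norm_real, Real.norm_eq_abs, abs_of_pos (by linarith)]
    have h3 : ‖(α : ℂ) * ((α : ℂ) + 2) * d1 ^ 2‖ = α * (α + 2) * t ^ 2 := by
      rw [norm_mul, norm_mul, norm_pow, ht_def]
      congr 2
      · rw [Complex.norm_real, Real.norm_eq_abs, abs_of_pos hα]
      · have : ((α : ℂ) + 2) = ((α + 2 : ℝ) : ℂ) := by push_cast; ring
        rw [this, Complex.norm_real, Real.norm_eq_abs, abs_of_pos (by linarith)]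
    rw [h2, h3] at h1
    linarith [h1, hc2]
  -- final arithmetic
  have hgoal1 : ‖logCoeff2 h‖ = s / 4 := by
    have h24 : iteratedDeriv 2 h 0 = deriv (deriv h) 0 := by
      simp [iteratedDeriv_succ, iteratedDeriv_one]
    rw [logCoeff2, h24, ← hd2_def, norm_div, hs_def]
    norm_num
  have hgoal2 : ‖logCoeff1 h‖ = t / 2 := by
    rw [logCoeff1, ← hd1_def, norm_div, ht_def, Complex.norm_two]
  rw [hgoal1, hgoal2]
  have hpos2 : (0:ℝ) < α + 2 := by linarith
  have hat : α * t ≤ 2 := by nlinarith [hb1, ht0]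
  have hkey : s * (α + 2) - 2 * t * (α + 2) ≤ 4 := by
    nlinarith [hb2, mul_le_mul_of_nonneg_right hat (mul_nonneg (le_of_lt hpos2) ht0)]
  rw [le_div_iff₀ hpos2]
  nlinarith [hkey]
end

section
/- Let α > 0 and let f ∈ B₁(α) with logarithmic coefficients γ₁, γ₂. Then |γ₂| − |γ₁| ≥ −1/√((α+1)² + 1). -/
open Complex Metric

lemma final_real (α t s : ℝ) (hα : 0 < α) (ht : 0 ≤ t) (hs : 0 ≤ s)
    (key : ((α+1)^2 + 1) * t^2 - 1 ≤ (α+2) * s) :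
    s - t ≥ -1 / Real.sqrt ((α+1)^2 + 1) := by
  set A := (α+1)^2 + 1 with hA
  have hApos : 0 < A := by positivity
  set r := Real.sqrt A with hr
  have hrpos : 0 < r := Real.sqrt_pos.mpr hApos
  have hr2 : r^2 = A := Real.sq_sqrt hApos.le
  have h2r : α + 2 ≤ 2*r := by nlinarith [hr2, hrpos, sq_nonneg (2*r - (α+2))]
  rcases le_or_gt t (1/r) with hcase | hcase
  · have h1 : -1/r ≤ -t := by rw [neg_div]; linarith
    linarith
  · have hrt : 1 < t * r := (div_lt_iff₀ hrpos).mp hcase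
    have key2 : 0 ≤ (r*t - 1) * (r*(r*t + 1) - (α+2)) := by
      refine mul_nonneg (by nlinarith) ?_
      nlinarith [mul_pos hrpos (show (0:ℝ) < r*t - 1 by nlinarith)]
    have e1 : r*(A*t^2-1) ≤ r*((α+2)*s) := mul_le_mul_of_nonneg_left key hrpos.le
    have e2 : (r*t-1)*(r*(r*t+1)-(α+2)) = r*(A*t^2-1) - (α+2)*(r*t-1) := by
      rw [← hr2]; ring
    have hkey3 : 0 ≤ (α+2) * (r*s - r*t + 1) := by nlinarith [key2, e1, e2]
    have hα2 : (0:ℝ) < α + 2 := by linarith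
    have h4 : 0 ≤ r*s - r*t + 1 := nonneg_of_mul_nonneg_right hkey3 hα2
    rw [ge_iff_le, div_le_iff₀ hrpos]
    linarith


lemma abs_lt_abs_of_normSq {u v : ℂ} (h : Complex.normSq u < Complex.normSq v) :
    ‖u‖ < ‖v‖ := by
  rw [Complex.norm_def, Complex.norm_def]
  exact Real.sqrt_lt_sqrt (Complex.normSq_nonneg _) h

lemma schwarz_pick_zero {ψ : ℂ → ℂ} (hd : DifferentiableOn ℂ ψ (ball 0 1))
    (hb : ∀ z ∈ ball (0:ℂ) 1, ‖ψ z‖ ≤ 1) :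
    ‖deriv ψ 0‖ ≤ 1 - ‖ψ 0‖ ^ 2 := by
  have h0B : (0:ℂ) ∈ ball (0:ℂ) 1 := mem_ball_self one_pos
  by_cases hlt : ∀ z ∈ ball (0:ℂ) 1, ‖ψ z‖ < 1
  · set a := ψ 0 with ha_def
    have ha : ‖a‖ < 1 := hlt 0 h0B
    have hna : Complex.normSq a < 1 := by
      rw [← Complex.sq_norm]; nlinarith [norm_nonneg a]
    set g : ℂ → ℂ := fun z => (ψ z - a) / (1 - (starRingEnd ℂ) a * ψ z) with hg_def
    have hden : ∀ z ∈ ball (0:ℂ) 1, (1 : ℂ) - (starRingEnd ℂ) a * ψ z ≠ 0 := by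
      intro z hz hc
      have h1 : ‖(starRingEnd ℂ) a * ψ z‖ < 1 := by
        rw [norm_mul, Complex.norm_conj]
        calc ‖a‖ * ‖ψ z‖ ≤ ‖a‖ * 1 :=
              mul_le_mul_of_nonneg_left (hb z hz) (norm_nonneg a)
          _ < 1 := by simpa using ha
      rw [sub_eq_zero] at hc
      rw [← hc] at h1
      simp at h1
    have hgd : DifferentiableOn ℂ g (ball 0 1) := by
      refine DifferentiableOn.div (hd.sub_const a) ?_ hden
      exact (differentiableOn_const _).sub ((differentiableOn_const _).mul hd)
    have hg0 : g 0 = 0 := by simp [hg_def, ha_def]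
    have hmaps : Set.MapsTo g (ball (0:ℂ) 1) (ball (g 0) 1) := by
      rw [hg0]
      intro z hz
      rw [mem_ball_zero_iff]
      have hlt1 : ‖ψ z - a‖ < ‖1 - (starRingEnd ℂ) a * ψ z‖ := by
        apply abs_lt_abs_of_normSq
        have hnu : Complex.normSq (ψ z) < 1 := by
          rw [← Complex.sq_norm]; nlinarith [norm_nonneg (ψ z), hlt z hz]
        simp only [Complex.normSq_apply, Complex.sub_re, Complex.sub_im, Complex.mul_re,
          Complex.mul_im, Complex.conj_re, Complex.conj_im, Complex.one_re, Complex.one_im]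
        simp only [Complex.normSq_apply] at hnu hna
        nlinarith [hnu, hna]
      have hdpos : 0 < ‖1 - (starRingEnd ℂ) a * ψ z‖ :=
        norm_pos_iff.mpr (hden z hz)
      rw [hg_def]
      simp only [norm_div]
      exact (div_lt_one hdpos).mpr hlt1
    have hschwarz := Complex.norm_deriv_le_div_of_mapsTo_ball hgd (hmaps.mono_right ball_subset_closedBall) one_pos
    -- compute deriv g 0
    have hψ0 : HasDerivAt ψ (deriv ψ 0) 0 :=
      (hd.differentiableAt (isOpen_ball.mem_nhds h0B)).hasDerivAt
    have hc0 : (1:ℂ) - (starRingEnd ℂ) a * a ≠ 0 := hden 0 h0B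
    have hgder : HasDerivAt g (deriv ψ 0 / (1 - (starRingEnd ℂ) a * a)) 0 := by
      have hnum : HasDerivAt (fun z => ψ z - a) (deriv ψ 0) 0 := hψ0.sub_const a
      have hden' : HasDerivAt (fun z => (1:ℂ) - (starRingEnd ℂ) a * ψ z)
          (-((starRingEnd ℂ) a * deriv ψ 0)) 0 := by
        simpa using (hψ0.const_mul ((starRingEnd ℂ) a)).const_sub 1
      have : HasDerivAt (fun z => (ψ z - a) / (1 - (starRingEnd ℂ) a * ψ z)) _ 0 := hnum.div hden' hc0
      convert this using 1
      rw [ha_def] at hc0 ⊢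
      field_simp
      ring
    have hderg : deriv g 0 = deriv ψ 0 / (1 - (starRingEnd ℂ) a * a) := hgder.deriv
    rw [hderg] at hschwarz
    have hca : (1:ℂ) - (starRingEnd ℂ) a * a = ((1 - Complex.normSq a : ℝ) : ℂ) := by
      rw [Complex.ofReal_sub, Complex.ofReal_one]
      congr 1
      rw [mul_comm, Complex.mul_conj]
    have habs : ‖(1:ℂ) - (starRingEnd ℂ) a * a‖ = 1 - Complex.normSq a := by
      rw [hca, Complex.norm_real, Real.norm_eq_abs, abs_of_pos (by linarith)]
    rw [norm_div] at hschwarz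
    rw [habs] at hschwarz
    have hpos : (0:ℝ) < 1 - Complex.normSq a := by linarith
    rw [div_le_div_iff₀ hpos one_pos] at hschwarz
    rw [Complex.sq_norm]
    linarith
  · push_neg at hlt
    obtain ⟨z₀, hz₀, hge⟩ := hlt
    have heq1 : ‖ψ z₀‖ = 1 := le_antisymm (hb z₀ hz₀) hge
    have hmax : IsMaxOn (norm ∘ ψ) (ball (0:ℂ) 1) z₀ := by
      intro z hz
      simp only [Function.comp_apply, Set.mem_setOf_eq, heq1]
      exact hb z hz
    have hconst := Complex.eqOn_of_isPreconnected_of_isMaxOn_norm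
      (convex_ball (0:ℂ) 1).isPreconnected isOpen_ball hd hz₀ hmax
    have hev : ψ =ᶠ[nhds (0:ℂ)] fun _ => ψ z₀ :=
      Filter.eventuallyEq_of_mem (isOpen_ball.mem_nhds h0B) hconst
    have hd0 : deriv ψ 0 = 0 := by
      rw [hev.deriv_eq]; exact deriv_const _ _
    have hψ0 : ψ 0 = ψ z₀ := hconst h0B
    rw [hd0, hψ0, heq1]
    norm_num


lemma key_ineq (α : ℝ) (hα : 0 < α) (f h : ℂ → ℂ)
    (hfa : AnalyticOnNhd ℂ f (ball 0 1)) (hha : AnalyticOnNhd ℂ h (ball 0 1))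
    (hf0 : f 0 = 0) (hf'0 : deriv f 0 = 1) (hh0 : h 0 = 0)
    (hfeq : ∀ z ∈ ball (0 : ℂ) 1, f z = z * Complex.exp (h z))
    (hpos : ∀ z ∈ ball (0 : ℂ) 1, 0 < (Complex.exp ((α - 1 : ℂ) * h z) * deriv f z).re) :
    ‖((α:ℂ)+2) * (deriv (deriv h) 0 / 4) - (deriv h 0 / 2)^2‖
      ≤ 1 - ‖((α:ℂ)+1) * (deriv h 0 / 2)‖ ^ 2 := by
  have h0B : (0:ℂ) ∈ ball (0:ℂ) 1 := mem_ball_self one_pos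
  have hh'a : AnalyticOnNhd ℂ (deriv h) (ball 0 1) := hha.deriv
  have hh''a : AnalyticOnNhd ℂ (deriv (deriv h)) (ball 0 1) := hh'a.deriv
  -- derivative of f on the ball
  have derivF : ∀ z ∈ ball (0:ℂ) 1, deriv f z = Complex.exp (h z) * (1 + z * deriv h z) := by
    intro z hz
    have he : f =ᶠ[nhds z] fun w => w * Complex.exp (h w) :=
      Filter.eventuallyEq_of_mem (isOpen_ball.mem_nhds hz) hfeq
    rw [he.deriv_eq]
    have hd : HasDerivAt (fun w => w * Complex.exp (h w))
        (1 * Complex.exp (h z) + z * (Complex.exp (h z) * deriv h z)) z :=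
      (hasDerivAt_id z).mul ((hha z hz).differentiableAt.hasDerivAt.cexp)
    rw [hd.deriv]; ring
  -- the Caratheodory function q
  set q : ℂ → ℂ := fun z => Complex.exp ((α:ℂ) * h z) * (1 + z * deriv h z) with hq_def
  have hq_pos : ∀ z ∈ ball (0:ℂ) 1, 0 < (q z).re := by
    intro z hz
    have hqz : Complex.exp (((α:ℂ)-1) * h z) * deriv f z = q z := by
      have harg : ((α:ℂ)-1) * h z + h z = (α:ℂ) * h z := by ring
      rw [derivF z hz, hq_def, ← mul_assoc, ← Complex.exp_add, harg]
    rw [← hqz]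
    exact hpos z hz
  have hq0 : q 0 = 1 := by simp [hq_def, hh0]
  have hhd : DifferentiableOn ℂ h (ball 0 1) := fun z hz => (hha z hz).differentiableWithinAt
  have hh'd : DifferentiableOn ℂ (deriv h) (ball 0 1) :=
    fun z hz => (hh'a z hz).differentiableWithinAt
  have hqd : DifferentiableOn ℂ q (ball 0 1) := by
    apply DifferentiableOn.mul
    · exact (hhd.const_mul _).cexp
    · exact (differentiableOn_const _).add (differentiableOn_id.mul hh'd)
  -- first and second derivatives of q at 0
  set Q : ℂ → ℂ := fun z => Complex.exp ((α:ℂ) * h z) * ((α:ℂ) * deriv h z) * (1 + z * deriv h z)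
      + Complex.exp ((α:ℂ) * h z) * (1 * deriv h z + z * deriv (deriv h) z) with hQ_def
  have hq' : ∀ z ∈ ball (0:ℂ) 1, HasDerivAt q (Q z) z := by
    intro z hz
    have hdh : HasDerivAt h (deriv h z) z := (hha z hz).differentiableAt.hasDerivAt
    have hdh' : HasDerivAt (deriv h) (deriv (deriv h) z) z :=
      (hh'a z hz).differentiableAt.hasDerivAt
    have hE : HasDerivAt (fun w => Complex.exp ((α:ℂ) * h w))
        (Complex.exp ((α:ℂ) * h z) * ((α:ℂ) * deriv h z)) z := (hdh.const_mul _).cexp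
    have hG : HasDerivAt (fun w => 1 + w * deriv h w)
        (1 * deriv h z + z * deriv (deriv h) z) z :=
      ((hasDerivAt_id z).mul hdh').const_add 1
    have : HasDerivAt (fun w => Complex.exp ((α:ℂ) * h w) * (1 + w * deriv h w)) _ z := hE.mul hG
    simpa [hQ_def, hq_def, mul_comm, mul_assoc, mul_left_comm] using this
  have hP1 : deriv q 0 = ((α:ℂ)+1) * deriv h 0 := by
    rw [(hq' 0 h0B).deriv]
    simp [hQ_def, hh0]
    ring
  have hP2 : deriv (deriv q) 0
      = ((α:ℂ)+2) * deriv (deriv h) 0 + ((α:ℂ)^2+2*(α:ℂ)) * (deriv h 0)^2 := by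
    have hEq : deriv q =ᶠ[nhds (0:ℂ)] Q :=
      Filter.eventuallyEq_of_mem (isOpen_ball.mem_nhds h0B) (fun z hz => (hq' z hz).deriv)
    rw [hEq.deriv_eq]
    have hdh : HasDerivAt h (deriv h 0) 0 := (hha 0 h0B).differentiableAt.hasDerivAt
    have hdh' : HasDerivAt (deriv h) (deriv (deriv h) 0) 0 :=
      (hh'a 0 h0B).differentiableAt.hasDerivAt
    have hdh'' : HasDerivAt (deriv (deriv h)) (deriv (deriv (deriv h)) 0) 0 :=
      (hh''a 0 h0B).differentiableAt.hasDerivAt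
    have hE : HasDerivAt (fun w => Complex.exp ((α:ℂ) * h w))
        (Complex.exp ((α:ℂ) * h 0) * ((α:ℂ) * deriv h 0)) 0 := (hdh.const_mul _).cexp
    have hA : HasDerivAt (fun w => (α:ℂ) * deriv h w) ((α:ℂ) * deriv (deriv h) 0) 0 :=
      hdh'.const_mul _
    have hEA := hE.mul hA
    have hG : HasDerivAt (fun w => 1 + w * deriv h w)
        (1 * deriv h 0 + 0 * deriv (deriv h) 0) 0 :=
      ((hasDerivAt_id 0).mul hdh').const_add 1
    have hterm1 := hEA.mul hG
    have hG2 : HasDerivAt (fun w => 1 * deriv h w + w * deriv (deriv h) w)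
        (1 * deriv (deriv h) 0 + (1 * deriv (deriv h) 0 + 0 * deriv (deriv (deriv h)) 0)) 0 :=
      (hdh'.const_mul 1).add ((hasDerivAt_id 0).mul hdh'')
    have hterm2 := hE.mul hG2
    have htot := hterm1.add hterm2
    have htot' : HasDerivAt Q _ 0 := htot
    rw [htot'.deriv]
    simp [hh0]
    ring
  -- the function omega
  have hq1 : ∀ z ∈ ball (0:ℂ) 1, q z + 1 ≠ 0 := by
    intro z hz hc
    have h2 := hq_pos z hz
    have : q z = -1 := by linear_combination hc
    rw [this] at h2
    norm_num at h2
  set ω : ℂ → ℂ := fun z => (q z - 1) / (q z + 1) with hω_def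
  have hω0 : ω 0 = 0 := by simp [hω_def, hq0]
  have hωd : DifferentiableOn ℂ ω (ball 0 1) :=
    (hqd.sub_const 1).div (hqd.add_const 1) hq1
  have hωmaps : Set.MapsTo ω (ball (0:ℂ) 1) (ball (0:ℂ) 1) := by
    intro z hz
    rw [mem_ball_zero_iff]
    have h1 : Complex.normSq (q z - 1) < Complex.normSq (q z + 1) := by
      simp only [Complex.normSq_apply, Complex.sub_re, Complex.sub_im, Complex.add_re,
        Complex.add_im, Complex.one_re, Complex.one_im]
      nlinarith [hq_pos z hz]
    have h2 : ‖q z - 1‖ < ‖q z + 1‖ := by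
      rw [Complex.norm_def, Complex.norm_def]
      exact Real.sqrt_lt_sqrt (Complex.normSq_nonneg _) h1
    have hdpos : 0 < ‖q z + 1‖ := norm_pos_iff.mpr (hq1 z hz)
    rw [hω_def]
    simp only [norm_div]
    exact (div_lt_one hdpos).mpr h2
  have hωa : AnalyticOnNhd ℂ ω (ball 0 1) := hωd.analyticOnNhd isOpen_ball
  have hqa : AnalyticOnNhd ℂ q (ball 0 1) := hqd.analyticOnNhd isOpen_ball
  have hω'a : AnalyticOnNhd ℂ (deriv ω) (ball 0 1) := hωa.deriv
  have hq'a : AnalyticOnNhd ℂ (deriv q) (ball 0 1) := hqa.deriv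
  -- relation between derivatives of ω and q
  have hprod : ∀ z ∈ ball (0:ℂ) 1, deriv ω z * (q z + 1) + ω z * deriv q z = deriv q z := by
    intro z hz
    have h1 : HasDerivAt (fun w => ω w * (q w + 1))
        (deriv ω z * (q z + 1) + ω z * deriv q z) z := by
      exact ((hωa z hz).differentiableAt.hasDerivAt).mul
        (((hqa z hz).differentiableAt.hasDerivAt).add_const 1)
    have h2 : (fun w => ω w * (q w + 1)) =ᶠ[nhds z] fun w => q w - 1 :=
      Filter.eventuallyEq_of_mem (isOpen_ball.mem_nhds hz)
        (fun w hw => div_mul_cancel₀ _ (hq1 w hw))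
    have h3 : HasDerivAt (fun w => q w - 1)
        (deriv ω z * (q z + 1) + ω z * deriv q z) z := h1.congr_of_eventuallyEq h2.symm
    have h4 := h3.deriv
    rw [deriv_sub_const] at h4
    exact h4.symm
  have hW1 : deriv ω 0 = deriv q 0 / 2 := by
    have := hprod 0 h0B
    rw [hq0, hω0] at this
    field_simp at this ⊢
    linear_combination this
  have hW2 : deriv (deriv ω) 0 = deriv (deriv q) 0 / 2 - (deriv q 0)^2 / 2 := by
    have hEq : (fun z => deriv ω z * (q z + 1) + ω z * deriv q z) =ᶠ[nhds (0:ℂ)] deriv q :=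
      Filter.eventuallyEq_of_mem (isOpen_ball.mem_nhds h0B) (fun z hz => hprod z hz)
    have hL : HasDerivAt (fun z => deriv ω z * (q z + 1) + ω z * deriv q z)
        (deriv (deriv ω) 0 * (q 0 + 1) + deriv ω 0 * deriv q 0
          + (deriv ω 0 * deriv q 0 + ω 0 * deriv (deriv q) 0)) 0 := by
      have a1 := ((hω'a 0 h0B).differentiableAt.hasDerivAt).mul
        (((hqa 0 h0B).differentiableAt.hasDerivAt).add_const 1)
      have a2 := ((hωa 0 h0B).differentiableAt.hasDerivAt).mul
        ((hq'a 0 h0B).differentiableAt.hasDerivAt)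
      exact a1.add a2
    have h5 : deriv (fun z => deriv ω z * (q z + 1) + ω z * deriv q z) 0
        = deriv (deriv q) 0 := hEq.deriv_eq
    rw [hL.deriv, hq0, hω0, hW1] at h5
    linear_combination h5 / 2
  -- ψ = dslope ω 0
  set ψ : ℂ → ℂ := dslope ω 0 with hψ_def
  have hψd : DifferentiableOn ℂ ψ (ball 0 1) :=
    (Complex.differentiableOn_dslope (isOpen_ball.mem_nhds h0B)).mpr hωd
  have hψb : ∀ z ∈ ball (0:ℂ) 1, ‖ψ z‖ ≤ 1 := by
    intro z hz
    have hm : Set.MapsTo ω (ball (0:ℂ) 1) (ball (ω 0) 1) := by rwa [hω0]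
    have := Complex.norm_dslope_le_div_of_mapsTo_ball hωd (hm.mono_right ball_subset_closedBall) hz
    simpa [hψ_def] using this
  have hψ0 : ψ 0 = deriv ω 0 := dslope_same ω 0
  have hψa : AnalyticOnNhd ℂ ψ (ball 0 1) := hψd.analyticOnNhd isOpen_ball
  have hψ'a : AnalyticOnNhd ℂ (deriv ψ) (ball 0 1) := hψa.deriv
  have hωid : ∀ z : ℂ, ω z = z * ψ z := by
    intro z
    have := sub_smul_dslope ω 0 z
    simp only [sub_zero, smul_eq_mul, hω0] at this
    rw [hψ_def, this]
  have hψ'0 : deriv ψ 0 = deriv (deriv ω) 0 / 2 := by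
    have hωder : ∀ z ∈ ball (0:ℂ) 1, deriv ω z = 1 * ψ z + z * deriv ψ z := by
      intro z hz
      have hd1 : HasDerivAt (fun w => w * ψ w) (1 * ψ z + z * deriv ψ z) z :=
        (hasDerivAt_id z).mul ((hψa z hz).differentiableAt.hasDerivAt)
      have hd2 : HasDerivAt ω (1 * ψ z + z * deriv ψ z) z := by
        apply hd1.congr_of_eventuallyEq
        filter_upwards with w
        exact hωid w
      exact hd2.deriv
    have hEq : deriv ω =ᶠ[nhds (0:ℂ)] fun z => 1 * ψ z + z * deriv ψ z :=
      Filter.eventuallyEq_of_mem (isOpen_ball.mem_nhds h0B) hωder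
    rw [hEq.deriv_eq]
    have hd3 : HasDerivAt (fun z => 1 * ψ z + z * deriv ψ z)
        (1 * deriv ψ 0 + (1 * deriv ψ 0 + 0 * deriv (deriv ψ) 0)) 0 :=
      (((hψa 0 h0B).differentiableAt.hasDerivAt).const_mul 1).add
        ((hasDerivAt_id 0).mul ((hψ'a 0 h0B).differentiableAt.hasDerivAt))
    rw [hd3.deriv]
    ring
  -- Schwarz-Pick
  have hSP : ‖deriv ψ 0‖ ≤ 1 - ‖ψ 0‖ ^ 2 :=
    schwarz_pick_zero hψd hψb
  have e1 : ψ 0 = ((α:ℂ)+1) * (deriv h 0 / 2) := by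
    rw [hψ0, hW1, hP1]; ring
  have e2 : deriv ψ 0 = ((α:ℂ)+2) * (deriv (deriv h) 0 / 4) - (deriv h 0 / 2)^2 := by
    rw [hψ'0, hW2, hP1, hP2]; ring
  rw [← e1, ← e2]
  exact hSP


/-- For `α > 0` and `f ∈ B₁(α)` with logarithmic coefficients `γ₁, γ₂`:
`|γ₂| - |γ₁| ≥ -1/√((α+1)² + 1)`. -/
theorem stmt_2 (α : ℝ) (hα : 0 < α) (f h : ℂ → ℂ) (hf : BazilevicB1 α f h) :
    ‖logCoeff2 h‖ - ‖logCoeff1 h‖ ≥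
      -1 / Real.sqrt ((α + 1) ^ 2 + 1) := by
  obtain ⟨hfa, hha, hf0, hf'0, hh0, hfeq, hpos⟩ := hf
  have hkey := key_ineq α hα f h hfa hha hf0 hf'0 hh0 hfeq hpos
  have hγ1 : logCoeff1 h = deriv h 0 / 2 := rfl
  have hγ2 : logCoeff2 h = deriv (deriv h) 0 / 4 := by
    have h2 : iteratedDeriv 2 h = deriv (deriv h) := by
      have : (2:ℕ) = 1 + 1 := rfl
      rw [this, iteratedDeriv_succ, iteratedDeriv_one]
    unfold logCoeff2
    rw [h2]
  rw [← hγ1, ← hγ2] at hkey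
  set t := ‖logCoeff1 h‖ with ht_def
  set s := ‖logCoeff2 h‖ with hs_def
  have ht0 : 0 ≤ t := norm_nonneg _
  have hs0 : 0 ≤ s := norm_nonneg _
  have hcast1 : ((α:ℂ)+1) = ((α+1:ℝ):ℂ) := by push_cast; ring
  have hcast2 : ((α:ℂ)+2) = ((α+2:ℝ):ℂ) := by push_cast; ring
  have habs1 : ‖((α:ℂ)+1) * logCoeff1 h‖ = (α+1) * t := by
    rw [norm_mul, hcast1, Complex.norm_real, Real.norm_eq_abs, abs_of_pos (by linarith)]
  have habs2 : ‖((α:ℂ)+2) * logCoeff2 h‖ = (α+2) * s := by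
    rw [norm_mul, hcast2, Complex.norm_real, Real.norm_eq_abs, abs_of_pos (by linarith)]
  have habs3 : ‖(logCoeff1 h)^2‖ = t^2 := by rw [norm_pow]
  have htri : ‖(logCoeff1 h)^2‖
      ≤ ‖((α:ℂ)+2) * logCoeff2 h - (logCoeff1 h)^2‖
        + ‖((α:ℂ)+2) * logCoeff2 h‖ := by
    have h1 := norm_add_le ((logCoeff1 h)^2 - ((α:ℂ)+2) * logCoeff2 h)
      (((α:ℂ)+2) * logCoeff2 h)
    rw [sub_add_cancel] at h1
    rwa [← norm_sub_rev (((α:ℂ)+2) * logCoeff2 h)] at h1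
  rw [habs1] at hkey
  rw [habs2, habs3] at htri
  have hfin : ((α+1)^2 + 1) * t^2 - 1 ≤ (α+2) * s := by nlinarith [hkey, htri]
  exact final_real α t s hα ht0 hs0 hfin
end

section
/- For every α > 0 there exists a function f ∈ B₁(α) whose logarithmic coefficients satisfy |γ₂| − |γ₁| = 1/(α+2); namely the function determined by (f(z)/z)^{α−1} f'(z) = (1+z²)/(1−z²) has a₂ = 0 and a₃ = 2/(α+2), hence γ₁ = 0 and |γ₂| = 1/(α+2). In particular, the upper bound |γ₂| − |γ₁| ≤ 1/(α+2) on B₁(α) is sharp for every α > 0. -/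
open Complex Metric

namespace SharpB1Aux

open intervalIntegral MeasureTheory Set Filter

noncomputable def II (j : ℕ) (γ : ℝ) (w : ℂ) : ℂ :=
  ∫ t in (0:ℝ)..1, (↑(t ^ γ) : ℂ) * ((1 - ↑t * w)⁻¹) ^ j

lemma norm_le_one_sub {t : ℝ} {x : ℂ} {r : ℝ} (ht0 : 0 ≤ t) (ht1 : t ≤ 1)
    (hx : ‖x‖ ≤ r) (hr : r < 1) : 1 - r ≤ ‖1 - (↑t : ℂ) * x‖ := by
  have h1 : ‖((↑t : ℂ) * x)‖ = t * ‖x‖ := by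
    rw [norm_mul, Complex.norm_real, Real.norm_of_nonneg ht0]
  have h2 : t * ‖x‖ ≤ r := by nlinarith [norm_nonneg x, (norm_nonneg x).trans hx]
  have h3 := norm_sub_norm_le (1 : ℂ) ((↑t : ℂ) * x)
  simp only [norm_one] at h3
  linarith [h3, h1 ▸ h2]

lemma one_sub_ne {t : ℝ} {x : ℂ} {r : ℝ} (ht0 : 0 ≤ t) (ht1 : t ≤ 1)
    (hx : ‖x‖ ≤ r) (hr : r < 1) : (1 : ℂ) - (↑t : ℂ) * x ≠ 0 := by
  intro h
  have := norm_le_one_sub ht0 ht1 hx hr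
  rw [h, norm_zero] at this
  linarith

lemma one_sub_ne' {s : ℂ} (hs : ‖s‖ < 1) : (1 : ℂ) - s ≠ 0 := by
  intro h
  have : s = 1 := by linear_combination -h
  rw [this] at hs; simp at hs

lemma contOn (j : ℕ) (γ : ℝ) {x : ℂ} (hx : ‖x‖ < 1) :
    ContinuousOn (fun t : ℝ => (↑(t ^ γ) : ℂ) * ((1 - ↑t * x)⁻¹) ^ j) (Ioc 0 1) := by
  apply ContinuousOn.mul
  · exact Complex.continuous_ofReal.comp_continuousOn
      (continuousOn_id.rpow_const fun t ht => Or.inl (ne_of_gt ht.1))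
  · apply ContinuousOn.pow
    apply ContinuousOn.inv₀
    · exact (continuous_const.sub (Complex.continuous_ofReal.mul continuous_const)).continuousOn
    · intro t ht
      exact one_sub_ne ht.1.le ht.2 le_rfl hx

lemma intInt (j : ℕ) {γ : ℝ} (hγ : -1 < γ) {x : ℂ} (hx : ‖x‖ < 1) :
    IntervalIntegrable (fun t : ℝ => (↑(t ^ γ) : ℂ) * ((1 - ↑t * x)⁻¹) ^ j) volume 0 1 := by
  have hIoc : Set.uIoc (0:ℝ) 1 = Ioc 0 1 := uIoc_of_le zero_le_one
  have hbound : IntervalIntegrable (fun t : ℝ => ((1 - ‖x‖)⁻¹) ^ j * t ^ γ) volume 0 1 :=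
    (intervalIntegrable_rpow' hγ).const_mul _
  apply hbound.mono_fun
  · rw [hIoc]
    exact (contOn j γ hx).aestronglyMeasurable measurableSet_Ioc
  · rw [hIoc]
    refine (ae_restrict_iff' measurableSet_Ioc).2 ?_
    filter_upwards with t
    intro ht
    have ht0 := ht.1
    have h1 : (0:ℝ) < 1 - ‖x‖ := by linarith
    have h2 : 1 - ‖x‖ ≤ ‖1 - (↑t:ℂ) * x‖ := norm_le_one_sub ht0.le ht.2 le_rfl hx
    have h3 : ‖((1 - (↑t:ℂ) * x)⁻¹)‖ ≤ (1 - ‖x‖)⁻¹ := by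
      rw [norm_inv]
      exact inv_anti₀ h1 h2
    rw [norm_mul, norm_pow, Complex.norm_real, Real.norm_of_nonneg (Real.rpow_nonneg ht0.le γ),
      Real.norm_of_nonneg (by positivity)]
    calc t ^ γ * ‖(1 - (↑t:ℂ) * x)⁻¹‖ ^ j ≤ t ^ γ * ((1 - ‖x‖)⁻¹) ^ j := by
          apply mul_le_mul_of_nonneg_left _ (Real.rpow_nonneg ht0.le γ)
          exact pow_le_pow_left₀ (norm_nonneg _) h3 j
      _ = (1 - ‖x‖)⁻¹ ^ j * t ^ γ := by ring

lemma hasDerivAt_II (j : ℕ) (hj : 1 ≤ j) {γ : ℝ} (hγ : -1 < γ) {w₀ : ℂ} (hw : ‖w₀‖ < 1) :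
    HasDerivAt (II j γ) ((j : ℂ) * II (j+1) (γ+1) w₀) w₀ := by
  have hIoc : Set.uIoc (0:ℝ) 1 = Ioc 0 1 := uIoc_of_le zero_le_one
  set ε := (1 - ‖w₀‖)/2 with hεdef
  have hε0 : 0 < ε := by have : 0 < 1 - ‖w₀‖ := by linarith
                         positivity
  set r := (1 + ‖w₀‖)/2 with hrdef
  have hr1 : r < 1 := by rw [hrdef]; linarith
  have hr0 : 0 < 1 - r := by linarith
  have hball : ∀ x ∈ ball w₀ ε, ‖x‖ ≤ r := by
    intro x hx
    have h1 : ‖x - w₀‖ < ε := mem_ball_iff_norm.mp hx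
    have h2 := norm_sub_norm_le x w₀
    rw [hrdef]; rw [hεdef] at h1; linarith
  have key := intervalIntegral.hasDerivAt_integral_of_dominated_loc_of_deriv_le
    (F := fun (x : ℂ) (t : ℝ) => (↑(t ^ γ) : ℂ) * ((1 - ↑t * x)⁻¹) ^ j)
    (F' := fun (x : ℂ) (t : ℝ) => (j : ℂ) * ((↑(t ^ (γ+1)) : ℂ) * ((1 - ↑t * x)⁻¹) ^ (j+1)))
    (bound := fun _ => (j : ℝ) * ((1 - r)⁻¹) ^ (j+1))
    (μ := volume) (a := 0) (b := 1) (x₀ := w₀) (s := ball w₀ ε) (ball_mem_nhds w₀ hε0) ?_ ?_ ?_ ?_ ?_ ?_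
  · have h2 := key.2
    rw [intervalIntegral.integral_const_mul] at h2
    exact h2
  · filter_upwards [ball_mem_nhds w₀ hε0] with x hx
    rw [hIoc]
    exact (contOn j γ (lt_of_le_of_lt (hball x hx) hr1)).aestronglyMeasurable measurableSet_Ioc
  · exact intInt j hγ hw
  · rw [hIoc]
    have : ContinuousOn (fun t : ℝ => (j : ℂ) * ((↑(t ^ (γ+1)) : ℂ) * ((1 - ↑t * w₀)⁻¹) ^ (j+1)))
        (Ioc 0 1) := (contOn (j+1) (γ+1) hw).const_smul (j:ℂ) |>.congr ?_
    · exact this.aestronglyMeasurable measurableSet_Ioc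
    · intro t _; simp [smul_eq_mul]
  · rw [hIoc]
    filter_upwards with t
    intro ht x hx
    have hxr := hball x hx
    have h2 : 1 - r ≤ ‖1 - (↑t:ℂ) * x‖ := norm_le_one_sub ht.1.le ht.2 hxr hr1
    have h3 : ‖((1 - (↑t:ℂ) * x)⁻¹)‖ ≤ (1 - r)⁻¹ := by
      rw [norm_inv]; exact inv_anti₀ hr0 h2
    have h4 : t ^ (γ+1) ≤ 1 := Real.rpow_le_one ht.1.le ht.2 (by linarith)
    rw [norm_mul, norm_mul, norm_pow, Complex.norm_natCast, Complex.norm_real,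
      Real.norm_of_nonneg (Real.rpow_nonneg ht.1.le _)]
    calc (j:ℝ) * (t ^ (γ+1) * ‖(1 - (↑t:ℂ) * x)⁻¹‖ ^ (j+1))
        ≤ (j:ℝ) * (1 * ((1 - r)⁻¹) ^ (j+1)) := by
          apply mul_le_mul_of_nonneg_left _ (Nat.cast_nonneg j)
          apply mul_le_mul h4 (pow_le_pow_left₀ (norm_nonneg _) h3 _) (by positivity)
            (by positivity)
      _ = (j : ℝ) * ((1 - r)⁻¹) ^ (j+1) := by ring
  · exact intervalIntegrable_const
  · rw [hIoc]
    filter_upwards with t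
    intro ht x hx
    have hxr := hball x hx
    have hne : (1:ℂ) - ↑t * x ≠ 0 := one_sub_ne ht.1.le ht.2 hxr hr1
    have hd1 : HasDerivAt (fun y : ℂ => 1 - ↑t * y) (-(↑t:ℂ)) x := by
      simpa using ((hasDerivAt_id x).const_mul (↑t:ℂ)).const_sub 1
    have hd2 := hd1.inv hne
    have hd3 := hd2.pow j
    have hd4 := hd3.const_mul (↑(t ^ γ) : ℂ)
    refine hd4.congr_deriv ?_
    simp only [Pi.inv_apply]
    have hγ1 : (↑(t ^ (γ+1)) : ℂ) = ↑(t ^ γ) * ↑t := by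
      rw [Real.rpow_add_one (ne_of_gt ht.1)]; push_cast; ring
    have hpow : ((1 - (↑t:ℂ) * x)⁻¹) ^ (j-1) * ((1 - (↑t:ℂ) * x)⁻¹) ^ 2
        = ((1 - (↑t:ℂ) * x)⁻¹) ^ (j+1) := by
      rw [← pow_add]; congr 1; omega
    rw [hγ1, ← hpow]
    field_simp


lemma II_zero (j : ℕ) {γ : ℝ} (hγ : -1 < γ) : II j γ 0 = ((1/(γ+1) : ℝ) : ℂ) := by
  have h1 : II j γ 0 = ∫ t in (0:ℝ)..1, ((t ^ γ : ℝ) : ℂ) := by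
    unfold II
    congr 1; funext t; simp
  rw [h1]
  have h2 : (∫ t in (0:ℝ)..1, ((t ^ γ : ℝ) : ℂ)) = ((∫ t in (0:ℝ)..1, t ^ γ : ℝ) : ℂ) := by
    simpa using RCLike.intervalIntegral_ofReal (𝕜 := ℂ) (f := fun t : ℝ => t ^ γ) (a := 0) (b := 1)
  rw [h2, integral_rpow (Or.inl hγ), Real.zero_rpow (ne_of_gt (by linarith : (0:ℝ) < γ+1)),
    Real.one_rpow]
  norm_num

lemma ftc {β : ℝ} (hβ : 0 < β) {w : ℂ} (hw : ‖w‖ < 1) :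
    (β:ℂ) * II 1 (β-1) w + w * II 2 β w = (1 - w)⁻¹ := by
  set φ' : ℝ → ℂ := fun t =>
    (β:ℂ) * ((↑(t ^ (β-1)) : ℂ) * ((1 - ↑t * w)⁻¹) ^ 1) +
      w * ((↑(t ^ β) : ℂ) * ((1 - ↑t * w)⁻¹) ^ 2) with hφ'def
  have hint1 := (intInt 1 (γ := β-1) (by linarith) hw).const_mul (β:ℂ)
  have hint2 := (intInt 2 (γ := β) (by linarith) hw).const_mul w
  have hint : IntervalIntegrable φ' volume 0 1 := hint1.add hint2
  have hcont : ContinuousOn (fun t : ℝ => (↑(t ^ β) : ℂ) * (1 - ↑t * w)⁻¹) (Icc 0 1) := by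
    apply ContinuousOn.mul
    · exact Complex.continuous_ofReal.comp_continuousOn
        (continuousOn_id.rpow_const fun t ht => Or.inr hβ.le)
    · apply ContinuousOn.inv₀
      · exact (continuous_const.sub (Complex.continuous_ofReal.mul continuous_const)).continuousOn
      · intro t ht
        exact one_sub_ne ht.1 ht.2 le_rfl hw
  have hderiv : ∀ t ∈ Ioo (0:ℝ) 1,
      HasDerivAt (fun t : ℝ => (↑(t ^ β) : ℂ) * (1 - ↑t * w)⁻¹) (φ' t) t := by
    intro t ht
    have h1 : HasDerivAt (fun t : ℝ => ((t ^ β : ℝ) : ℂ)) ((β * t ^ (β-1) : ℝ) : ℂ) t :=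
      (Real.hasDerivAt_rpow_const (Or.inl (ne_of_gt ht.1))).ofReal_comp
    have h2 : HasDerivAt (fun t : ℝ => (1:ℂ) - ↑t * w) (-w) t := by
      simpa using ((Complex.ofRealCLM.hasDerivAt).mul_const w).const_sub (1:ℂ)
    have hne : (1:ℂ) - ↑t * w ≠ 0 := one_sub_ne ht.1.le ht.2.le le_rfl hw
    have h3 : HasDerivAt (fun t : ℝ => ((1:ℂ) - ↑t * w)⁻¹)
        (-((((1:ℂ) - ↑t*w))^2)⁻¹ * (-w)) t := by
      simpa [Function.comp_def] using (hasDerivAt_inv hne).comp t h2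
    have h4 := h1.mul h3
    have h5 : HasDerivAt (fun t : ℝ => (↑(t ^ β) : ℂ) * (1 - ↑t * w)⁻¹) _ t := h4
    convert h5 using 1
    rw [hφ'def]
    push_cast
    rw [neg_mul_neg, ← inv_pow]
    ring
  have hftc := intervalIntegral.integral_eq_sub_of_hasDeriv_right_of_le zero_le_one hcont
    (fun t ht => (hderiv t ht).hasDerivWithinAt) hint
  have hval : (∫ t in (0:ℝ)..1, φ' t)
      = (β:ℂ) * II 1 (β-1) w + w * II 2 β w := by
    rw [hφ'def]
    rw [intervalIntegral.integral_add hint1 hint2,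
      intervalIntegral.integral_const_mul, intervalIntegral.integral_const_mul]
    rfl
  rw [← hval, hftc]
  rw [Real.zero_rpow hβ.ne', Real.one_rpow]
  push_cast
  simp

lemma re_pos {β : ℝ} (hβ : 0 < β) {w : ℂ} (hw : ‖w‖ < 1) :
    0 < (-1 + 2*(β:ℂ) * II 1 (β-1) w).re := by
  have hγ : (-1:ℝ) < β - 1 := by linarith
  have hii := intInt 1 (γ := β-1) hγ hw
  have h0 := Complex.reCLM.intervalIntegral_comp_comm hii
  have hre : (II 1 (β-1) w).re
      = ∫ t in (0:ℝ)..1, t ^ (β-1) * ((1 - (↑t:ℂ) * w)⁻¹).re := by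
    have h1 : (II 1 (β-1) w).re = Complex.reCLM (II 1 (β-1) w) := rfl
    rw [h1, II, ← h0]
    congr 1; funext t
    simp [Complex.re_ofReal_mul]
  have hAint : IntervalIntegrable
      (fun t : ℝ => t ^ (β-1) * ((1 - (↑t:ℂ) * w)⁻¹).re) volume 0 1 := by
    have h2 : (fun t : ℝ => t ^ (β-1) * ((1 - (↑t:ℂ) * w)⁻¹).re)
        = (fun t : ℝ => RCLike.re ((↑(t^(β-1)):ℂ) * ((1 - ↑t*w)⁻¹)^1)) := by
      funext t; simp [Complex.re_ofReal_mul]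
    rw [h2]; exact ⟨hii.1.re, hii.2.re⟩
  have hBint : IntervalIntegrable (fun t : ℝ => t ^ (β-1)) volume 0 1 :=
    intervalIntegrable_rpow' hγ
  set ψ : ℝ → ℝ :=
    fun t => 2*β*(t^(β-1) * ((1 - (↑t:ℂ)*w)⁻¹).re) - β * t^(β-1) with hψ
  have hψint : IntervalIntegrable ψ volume 0 1 :=
    (hAint.const_mul (2*β)).sub (hBint.const_mul β)
  have hψpos : 0 < ∫ t in (0:ℝ)..1, ψ t := by
    apply intervalIntegral.intervalIntegral_pos_of_pos_on hψint _ one_pos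
    intro t ht
    have hne : (1:ℂ) - ↑t*w ≠ 0 := one_sub_ne ht.1.le ht.2.le le_rfl hw
    have hN : 0 < Complex.normSq (1 - ↑t*w) := Complex.normSq_pos.2 hne
    have hrp : 0 < t ^ (β-1) := Real.rpow_pos_of_pos ht.1 _
    have hre' : ((1:ℂ) - ↑t*w).re = 1 - t * w.re := by simp
    have him' : ((1:ℂ) - ↑t*w).im = -(t * w.im) := by simp
    have hns : Complex.normSq (1 - ↑t*w) = (1 - t*w.re)^2 + (t*w.im)^2 := by
      rw [Complex.normSq_apply, hre', him']; ring
    have hw2 : w.re^2 + w.im^2 < 1 := by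
      have h5 : Complex.normSq w < 1 := by
        have h6 := Complex.sq_norm w
        have habs : ‖w‖ < 1 := hw
        nlinarith [norm_nonneg w]
      rw [Complex.normSq_apply] at h5; nlinarith [h5]
    have hN' : (0:ℝ) < (1 - t*w.re)^2 + (t*w.im)^2 := hns ▸ hN
    have hinvre : ((1 - (↑t:ℂ)*w)⁻¹).re
        = (1 - t*w.re) / ((1 - t*w.re)^2 + (t*w.im)^2) := by
      rw [Complex.inv_re, hre', hns]
    simp only [hψ]
    rw [hinvre]
    rw [show 2*β*(t^(β-1) * ((1 - t*w.re)/((1 - t*w.re)^2 + (t*w.im)^2))) - β * t^(β-1)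
        = β * t^(β-1) * ((2*(1-t*w.re) - ((1 - t*w.re)^2 + (t*w.im)^2))
            /((1 - t*w.re)^2 + (t*w.im)^2)) from by
          rw [sub_div (2*(1-t*w.re)) ((1 - t*w.re)^2 + (t*w.im)^2), div_self hN'.ne']; ring]
    apply mul_pos (mul_pos hβ hrp)
    apply div_pos _ hN'
    nlinarith [ht.1, ht.2, hw2, sq_nonneg w.re, sq_nonneg w.im, sq_nonneg t,
      mul_pos ht.1 ht.1]
  have hcalc : (-1 + 2*(β:ℂ) * II 1 (β-1) w).re = ∫ t in (0:ℝ)..1, ψ t := by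
    have hsplit : (∫ t in (0:ℝ)..1, ψ t)
        = 2*β * (∫ t in (0:ℝ)..1, t^(β-1) * ((1 - (↑t:ℂ)*w)⁻¹).re)
          - β * ∫ t in (0:ℝ)..1, t^(β-1) := by
      simp only [hψ]
      rw [intervalIntegral.integral_sub (hAint.const_mul _) (hBint.const_mul _),
        intervalIntegral.integral_const_mul, intervalIntegral.integral_const_mul]
    have hcast : (-1 + 2*(β:ℂ) * II 1 (β-1) w) = -1 + ((2*β:ℝ):ℂ) * II 1 (β-1) w := by
      push_cast; ring
    rw [hsplit, ← hre, integral_rpow (Or.inl hγ), hcast, Complex.add_re, Complex.neg_re,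
      Complex.one_re, Complex.re_ofReal_mul]
    have e : β - 1 + 1 = β := by ring
    rw [e, Real.zero_rpow hβ.ne', Real.one_rpow]
    field_simp
    ring
  rw [hcalc]; exact hψpos

noncomputable def gg (β : ℝ) (w : ℂ) : ℂ := -1 + 2*(β:ℂ) * II 1 (β-1) w
noncomputable def gg' (β : ℝ) (w : ℂ) : ℂ := 2*(β:ℂ) * II 2 β w
noncomputable def gg'' (β : ℝ) (w : ℂ) : ℂ := 2*(β:ℂ) * ((2:ℂ) * II 3 (β+1) w)

lemma gg_re_pos {β : ℝ} (hβ : 0 < β) {w : ℂ} (hw : ‖w‖ < 1) : 0 < (gg β w).re :=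
  re_pos hβ hw

lemma hasDerivAt_gg {β : ℝ} (hβ : 0 < β) {w : ℂ} (hw : ‖w‖ < 1) :
    HasDerivAt (gg β) (gg' β w) w := by
  have h := hasDerivAt_II 1 le_rfl (γ := β-1) (by linarith) hw
  have e : β - 1 + 1 = β := by ring
  rw [e] at h
  have h2 := (h.const_mul (2*(β:ℂ))).const_add (-1)
  have h3 : HasDerivAt (fun w => -1 + 2*(β:ℂ) * II 1 (β-1) w)
      (2*(β:ℂ) * II 2 β w) w := by
    have h2' : HasDerivAt (fun w => -1 + 2*(β:ℂ) * II 1 (β-1) w)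
        (2*(β:ℂ) * (((1:ℕ):ℂ) * II (1+1) β w)) w := h2
    convert h2' using 2 <;> push_cast <;> ring
  exact h3

lemma hasDerivAt_gg' {β : ℝ} (hβ : 0 < β) {w : ℂ} (hw : ‖w‖ < 1) :
    HasDerivAt (gg' β) (gg'' β w) w := by
  have h := (hasDerivAt_II 2 (by norm_num) (γ := β) (by linarith) hw).const_mul (2*(β:ℂ))
  have h3 : HasDerivAt (fun w => 2*(β:ℂ) * II 2 β w)
      (2*(β:ℂ) * ((2:ℂ) * II 3 (β+1) w)) w := by
    have h' : HasDerivAt (fun w => 2*(β:ℂ) * II 2 β w)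
        (2*(β:ℂ) * (((2:ℕ):ℂ) * II (2+1) (β+1) w)) w := h
    convert h' using 2 <;> push_cast <;> ring
  exact h3

lemma gg_zero {β : ℝ} (hβ : 0 < β) : gg β 0 = 1 := by
  rw [gg, II_zero 1 (by linarith)]
  have e : β - 1 + 1 = β := by ring
  rw [e]
  have hβ' : (β:ℂ) ≠ 0 := Complex.ofReal_ne_zero.2 hβ.ne'
  push_cast
  field_simp
  norm_num

lemma gg'_zero {β : ℝ} (hβ : 0 < β) : gg' β 0 = 2*(β:ℂ) * ((1/(β+1):ℝ):ℂ) := by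
  rw [gg', II_zero 2 (by linarith)]

lemma ode {β : ℝ} (hβ : 0 < β) {w : ℂ} (hw : ‖w‖ < 1) :
    (2*(β:ℂ)) * gg β w + 2*w*gg' β w = (2*(β:ℂ)) * ((1+w)/(1-w)) := by
  have hftc := ftc hβ hw
  have hne := one_sub_ne' hw
  have h2 : (1+w)/(1-w) = -1 + 2*(1-w)⁻¹ := by field_simp; ring
  rw [gg, gg', h2]
  linear_combination (4*(β:ℂ)) * hftc


noncomputable def hB (α : ℝ) (z : ℂ) : ℂ := ((α:ℂ))⁻¹ * Complex.log (gg (α/2) (z^2))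
noncomputable def fB (α : ℝ) (z : ℂ) : ℂ := z * Complex.exp (hB α z)
noncomputable def H1B (α : ℝ) (z : ℂ) : ℂ :=
  ((α:ℂ))⁻¹ * (gg' (α/2) (z^2) * (2*z) / gg (α/2) (z^2))
noncomputable def F1B (α : ℝ) (z : ℂ) : ℂ :=
  Complex.exp ((1-(α:ℂ)) * hB α z) * ((1+z^2)/(1-z^2))
noncomputable def F2B (α : ℝ) (z : ℂ) : ℂ :=
  ((1-(α:ℂ)) * H1B α z) * F1B α z + Complex.exp ((1-(α:ℂ)) * hB α z) * (4*z/(1-z^2)^2)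

lemma sq_norm_lt {z : ℂ} (hz : ‖z‖ < 1) : ‖z^2‖ < 1 := by
  rw [norm_pow]
  nlinarith [norm_nonneg z]

lemma re_frac_pos {s : ℂ} (hs : ‖s‖ < 1) : 0 < ((1+s)/(1-s)).re := by
  have hne : (1:ℂ) - s ≠ 0 := one_sub_ne' hs
  have hN : 0 < Complex.normSq (1-s) := Complex.normSq_pos.2 hne
  have hs2 : s.re^2 + s.im^2 < 1 := by
    have h5 : Complex.normSq s < 1 := by
      have h6 := Complex.sq_norm s
      have habs : ‖s‖ < 1 := hs
      nlinarith [norm_nonneg s]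
    rw [Complex.normSq_apply] at h5; nlinarith [h5]
  rw [Complex.div_re, ← add_div]
  apply div_pos _ hN
  simp only [Complex.add_re, Complex.sub_re, Complex.one_re, Complex.add_im, Complex.sub_im,
    Complex.one_im]
  nlinarith

section Main

variable {α : ℝ}

lemma gg_slit (hα : 0 < α) {z : ℂ} (hz : ‖z‖ < 1) :
    gg (α/2) (z^2) ∈ Complex.slitPlane :=
  Or.inl (gg_re_pos (half_pos hα) (sq_norm_lt hz))

lemma gg_ne (hα : 0 < α) {z : ℂ} (hz : ‖z‖ < 1) : gg (α/2) (z^2) ≠ 0 :=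
  Complex.slitPlane_ne_zero (gg_slit hα hz)

lemma hasDerivAt_u (hα : 0 < α) {z : ℂ} (hz : ‖z‖ < 1) :
    HasDerivAt (fun z : ℂ => gg (α/2) (z^2)) (gg' (α/2) (z^2) * (2*z)) z := by
  have h := (hasDerivAt_gg (half_pos hα) (sq_norm_lt hz)).comp z (hasDerivAt_pow 2 z)
  have h' : HasDerivAt (fun z : ℂ => gg (α/2) (z^2)) _ z := h
  simpa using h'

lemma hasDerivAt_hB (hα : 0 < α) {z : ℂ} (hz : ‖z‖ < 1) :
    HasDerivAt (hB α) (H1B α z) z := by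
  have h := ((hasDerivAt_u hα hz).clog (gg_slit hα hz)).const_mul ((α:ℂ))⁻¹
  exact h

lemma hasDerivAt_fB (hα : 0 < α) {z : ℂ} (hz : ‖z‖ < 1) :
    HasDerivAt (fB α) (Complex.exp (hB α z) * (1 + z * H1B α z)) z := by
  have h := (hasDerivAt_id z).mul ((hasDerivAt_hB hα hz).cexp)
  have h2 : HasDerivAt (fB α)
      (1 * Complex.exp (hB α z) + z * (Complex.exp (hB α z) * H1B α z)) z := h
  convert h2 using 1
  ring

lemma hB_zero (hα : 0 < α) : hB α 0 = 0 := by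
  rw [hB, show ((0:ℂ)^2) = 0 from by norm_num, gg_zero (half_pos hα), Complex.log_one, mul_zero]

lemma H1B_zero' : H1B α 0 = 0 := by
  simp [H1B]

lemma keyB (hα : 0 < α) {z : ℂ} (hz : ‖z‖ < 1) :
    Complex.exp (((α:ℂ) - 1) * hB α z) * deriv (fB α) z = (1 + z^2)/(1 - z^2) := by
  have hαc : (α:ℂ) ≠ 0 := Complex.ofReal_ne_zero.2 hα.ne'
  have hgne := gg_ne hα hz
  rw [(hasDerivAt_fB hα hz).deriv]
  have hexp2 : Complex.exp ((α:ℂ) * hB α z) = gg (α/2) (z^2) := by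
    rw [hB, show (α:ℂ) * (((α:ℂ))⁻¹ * Complex.log (gg (α/2) (z^2)))
        = Complex.log (gg (α/2) (z^2)) from by field_simp]
    exact Complex.exp_log hgne
  have hstep : Complex.exp (((α:ℂ)-1) * hB α z) * (Complex.exp (hB α z) * (1 + z * H1B α z))
      = gg (α/2) (z^2) * (1 + z * H1B α z) := by
    rw [← mul_assoc, ← Complex.exp_add,
      show ((α:ℂ)-1) * hB α z + hB α z = (α:ℂ) * hB α z from by ring, hexp2]
  rw [hstep]
  have hode := ode (half_pos hα) (sq_norm_lt hz)
  have h2β : (2*(((α/2 : ℝ)):ℂ)) = (α:ℂ) := by push_cast; ring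
  rw [h2β] at hode
  rw [H1B]
  have e1 : gg (α/2) (z^2) * (1 + z * ((α:ℂ)⁻¹ * (gg' (α/2) (z^2) * (2*z) / gg (α/2) (z^2))))
      = ((α:ℂ))⁻¹ * ((α:ℂ) * gg (α/2) (z^2) + 2*z^2*gg' (α/2) (z^2)) := by
    field_simp
  rw [e1, hode, ← mul_assoc, inv_mul_cancel₀ hαc, one_mul]

lemma H1B_eq : H1B α = fun z => z * (((α:ℂ))⁻¹ * (gg' (α/2) (z^2) * 2 / gg (α/2) (z^2))) := by
  funext z; rw [H1B]; ring

lemma hasDerivAt_H1B_zero (hα : 0 < α) : HasDerivAt (H1B α) ((4:ℂ)/((α:ℂ)+2)) 0 := by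
  have hβ := half_pos hα
  have hαc : (α:ℂ) ≠ 0 := Complex.ofReal_ne_zero.2 hα.ne'
  have hα2 : (α:ℂ) + 2 ≠ 0 := by
    have h := Complex.ofReal_ne_zero.2 (show α + 2 ≠ 0 by linarith)
    push_cast at h; exact h
  have hgg'c : HasDerivAt (fun z : ℂ => gg' (α/2) (z^2))
      (gg'' (α/2) ((0:ℂ)^2) * ((2:ℕ) * (0:ℂ)^1)) 0 :=
    (hasDerivAt_gg' hβ (by simp)).comp 0 (hasDerivAt_pow 2 0)
  have hnum := hgg'c.mul_const (2:ℂ)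
  have hden : HasDerivAt (fun z : ℂ => gg (α/2) (z^2))
      (gg' (α/2) ((0:ℂ)^2) * ((2:ℕ) * (0:ℂ)^1)) 0 :=
    (hasDerivAt_gg hβ (by simp)).comp 0 (hasDerivAt_pow 2 0)
  have hdne : gg (α/2) ((0:ℂ)^2) ≠ 0 := by
    rw [show ((0:ℂ)^2) = 0 from by norm_num, gg_zero hβ]; exact one_ne_zero
  have hdiv := hnum.div hden hdne
  have hG := hdiv.const_mul ((α:ℂ))⁻¹
  have hmul := (hasDerivAt_id (0:ℂ)).mul hG
  rw [H1B_eq]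
  have hmul' : HasDerivAt (fun z => z * (((α:ℂ))⁻¹ * (gg' (α/2) (z^2) * 2 / gg (α/2) (z^2)))) _ 0 :=
    hmul
  convert hmul' using 1
  simp only [Pi.div_apply]
  rw [show ((0:ℂ)^2) = 0 from by norm_num, gg_zero hβ, gg'_zero hβ]
  have hhalf : (α:ℂ)/2 + 1 ≠ 0 := by
    intro h; apply hα2; linear_combination 2*h
  push_cast
  field_simp
  ring

end Main


section Thm

variable {α : ℝ}

lemma everything (hα : 0 < α) :
    AnalyticOnNhd ℂ (fB α) (ball 0 1) ∧ AnalyticOnNhd ℂ (hB α) (ball 0 1) ∧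
    fB α 0 = 0 ∧ deriv (fB α) 0 = 1 ∧ hB α 0 = 0 ∧
    (∀ z ∈ ball (0 : ℂ) 1, fB α z = z * Complex.exp (hB α z)) ∧
    (∀ z ∈ ball (0 : ℂ) 1,
      Complex.exp (((α:ℂ) - 1) * hB α z) * deriv (fB α) z = (1 + z ^ 2) / (1 - z ^ 2)) ∧
    iteratedDeriv 2 (fB α) 0 = 0 ∧ iteratedDeriv 3 (fB α) 0 = 12/((α:ℂ)+2) ∧
    deriv (hB α) 0 = 0 ∧ iteratedDeriv 2 (hB α) 0 = 4/((α:ℂ)+2) := by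
  have hβ := half_pos hα
  have hαc : (α:ℂ) ≠ 0 := Complex.ofReal_ne_zero.2 hα.ne'
  have hα2 : (α:ℂ) + 2 ≠ 0 := by
    have h := Complex.ofReal_ne_zero.2 (show α + 2 ≠ 0 by linarith)
    push_cast at h; exact h
  have hz1 : ∀ z ∈ ball (0:ℂ) 1, ‖z‖ < 1 := fun z hz => mem_ball_zero_iff.mp hz
  have h0mem : (0:ℂ) ∈ ball (0:ℂ) 1 := mem_ball_self one_pos
  have hkey : ∀ z ∈ ball (0:ℂ) 1,
      Complex.exp (((α:ℂ) - 1) * hB α z) * deriv (fB α) z = (1 + z ^ 2) / (1 - z ^ 2) :=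
    fun z hz => keyB hα (hz1 z hz)
  have e2 : deriv (fB α) =ᶠ[nhds 0] F1B α := by
    apply Filter.eventuallyEq_of_mem (ball_mem_nhds (0:ℂ) one_pos)
    intro z hz
    have hznorm := hz1 z hz
    have hk := keyB hα hznorm
    rw [F1B]
    calc deriv (fB α) z
        = Complex.exp ((1-(α:ℂ)) * hB α z)
          * (Complex.exp (((α:ℂ)-1) * hB α z) * deriv (fB α) z) := by
          rw [← mul_assoc, ← Complex.exp_add,
            show (1-(α:ℂ)) * hB α z + ((α:ℂ)-1) * hB α z = 0 from by ring,
            Complex.exp_zero, one_mul]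
      _ = Complex.exp ((1-(α:ℂ)) * hB α z) * ((1+z^2)/(1-z^2)) := by rw [hk]
  have hF1d : ∀ z ∈ ball (0:ℂ) 1, HasDerivAt (F1B α) (F2B α z) z := by
    intro z hz
    have hznorm := hz1 z hz
    have hE : HasDerivAt (fun y => Complex.exp ((1-(α:ℂ)) * hB α y))
        (Complex.exp ((1-(α:ℂ)) * hB α z) * ((1-(α:ℂ)) * H1B α z)) z :=
      ((hasDerivAt_hB hα hznorm).const_mul (1-(α:ℂ))).cexp
    have hne : (1:ℂ) - z^2 ≠ 0 := one_sub_ne' (sq_norm_lt hznorm)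
    have h1 : HasDerivAt (fun y : ℂ => 1+y^2) (2*z) z := by
      simpa using (hasDerivAt_pow 2 z).const_add (1:ℂ)
    have h2 : HasDerivAt (fun y : ℂ => 1-y^2) (-(2*z)) z := by
      simpa using (hasDerivAt_pow 2 z).const_sub (1:ℂ)
    have hQ : HasDerivAt (fun y : ℂ => (1+y^2)/(1-y^2)) (4*z/(1-z^2)^2) z := by
      have hd := h1.div h2 hne
      have hd' : HasDerivAt (fun y : ℂ => (1+y^2)/(1-y^2))
          ((2*z*(1-z^2) - (1+z^2)*(-(2*z)))/(1-z^2)^2) z := hd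
      convert hd' using 1
      field_simp
      ring
    have hEQ := hE.mul hQ
    have h3 : HasDerivAt (F1B α)
        (Complex.exp ((1-(α:ℂ)) * hB α z) * ((1-(α:ℂ)) * H1B α z) * ((1+z^2)/(1-z^2))
          + Complex.exp ((1-(α:ℂ)) * hB α z) * (4*z/(1-z^2)^2)) z := hEQ
    convert h3 using 1
    rw [F2B, F1B]
    ring
  have e3 : deriv (deriv (fB α)) =ᶠ[nhds 0] F2B α :=
    (e2.deriv).trans (Filter.eventuallyEq_of_mem (ball_mem_nhds (0:ℂ) one_pos)
      (fun z hz => (hF1d z hz).deriv))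
  have ederivh : deriv (hB α) =ᶠ[nhds 0] H1B α :=
    Filter.eventuallyEq_of_mem (ball_mem_nhds (0:ℂ) one_pos)
      (fun z hz => (hasDerivAt_hB hα (hz1 z hz)).deriv)
  have hH1d := hasDerivAt_H1B_zero hα
  have hF10 : F1B α 0 = 1 := by rw [F1B, hB_zero hα]; norm_num
  refine ⟨?_, ?_, ?_, ?_, hB_zero hα, fun z _ => rfl, hkey, ?_, ?_, ?_, ?_⟩
  · exact DifferentiableOn.analyticOnNhd
      (fun z hz => (hasDerivAt_fB hα (hz1 z hz)).differentiableAt.differentiableWithinAt)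
      isOpen_ball
  · exact DifferentiableOn.analyticOnNhd
      (fun z hz => (hasDerivAt_hB hα (hz1 z hz)).differentiableAt.differentiableWithinAt)
      isOpen_ball
  · simp [fB]
  · rw [(hasDerivAt_fB hα (by simp : ‖(0:ℂ)‖ < 1)).deriv, hB_zero hα]
    simp
  · -- iteratedDeriv 2 f = 0
    simp only [show (2:ℕ) = 1 + 1 from rfl, iteratedDeriv_succ, iteratedDeriv_one, iteratedDeriv_zero]
    rw [Filter.EventuallyEq.deriv_eq e2, (hF1d 0 h0mem).deriv, F2B]
    simp [H1B_zero']
  · -- iteratedDeriv 3 f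
    simp only [show (3:ℕ) = 1 + 1 + 1 from rfl, iteratedDeriv_succ, iteratedDeriv_one, iteratedDeriv_zero]
    rw [Filter.EventuallyEq.deriv_eq e3]
    have hhB0 : HasDerivAt (hB α) (H1B α 0) 0 := hasDerivAt_hB hα (by simp)
    have hE0 : HasDerivAt (fun y => Complex.exp ((1-(α:ℂ)) * hB α y))
        (Complex.exp ((1-(α:ℂ)) * hB α 0) * ((1-(α:ℂ)) * H1B α 0)) 0 :=
      (hhB0.const_mul (1-(α:ℂ))).cexp
    have hT1 : HasDerivAt (fun y => ((1-(α:ℂ)) * H1B α y) * F1B α y)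
        (((1-(α:ℂ)) * ((4:ℂ)/((α:ℂ)+2))) * F1B α 0
          + ((1-(α:ℂ)) * H1B α 0) * F2B α 0) 0 :=
      (hH1d.const_mul (1-(α:ℂ))).mul (hF1d 0 h0mem)
    have hR : HasDerivAt (fun y : ℂ => 4*y/(1-y^2)^2) (4:ℂ) 0 := by
      have h2 : HasDerivAt (fun y : ℂ => 1-y^2) (-(2*0)) 0 := by
        simpa using (hasDerivAt_pow 2 (0:ℂ)).const_sub (1:ℂ)
      have hden : HasDerivAt (fun y : ℂ => (1-y^2)^2)
          ((2:ℕ) * ((1:ℂ)-(0:ℂ)^2)^1 * (-(2*0))) 0 := h2.pow 2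
      have hnum : HasDerivAt (fun y : ℂ => 4*y) (4:ℂ) 0 := by
        simpa using (hasDerivAt_id (0:ℂ)).const_mul (4:ℂ)
      have hdne : ((1:ℂ)-(0:ℂ)^2)^2 ≠ 0 := by norm_num
      have hd := hnum.div hden hdne
      have hd' : HasDerivAt (fun y : ℂ => 4*y/(1-y^2)^2)
          ((4 * ((1:ℂ)-(0:ℂ)^2)^2 - 4*0 * ((2:ℕ) * ((1:ℂ)-(0:ℂ)^2)^1 * (-(2*0))))
            / (((1:ℂ)-(0:ℂ)^2)^2)^2) 0 := hd
      convert hd' using 1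
      norm_num
    have hT2 := hE0.mul hR
    have hsum := hT1.add hT2
    have hsum' : HasDerivAt (F2B α) (((1-(α:ℂ)) * ((4:ℂ)/((α:ℂ)+2))) * F1B α 0
          + ((1-(α:ℂ)) * H1B α 0) * F2B α 0
          + (Complex.exp ((1-(α:ℂ)) * hB α 0) * ((1-(α:ℂ)) * H1B α 0) * (4*0/(1-(0:ℂ)^2)^2)
            + Complex.exp ((1-(α:ℂ)) * hB α 0) * 4)) 0 := hsum
    rw [hsum'.deriv, H1B_zero', hB_zero hα, hF10]
    simp only [mul_zero, zero_mul, add_zero, zero_add, mul_one, Complex.exp_zero, one_mul]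
    field_simp
    ring
  · rw [(hasDerivAt_hB hα (by simp : ‖(0:ℂ)‖ < 1)).deriv, H1B_zero']
  · simp only [show (2:ℕ) = 1 + 1 from rfl, iteratedDeriv_succ, iteratedDeriv_one, iteratedDeriv_zero]
    rw [Filter.EventuallyEq.deriv_eq ederivh, hH1d.deriv]

end Thm

end SharpB1Aux


/-- For every `α > 0` there is `f ∈ B₁(α)` with `(f z/z)^(α-1) * f' z = (1+z²)/(1-z²)`,
which has `a₂ = 0`, `a₃ = 2/(α+2)`, hence `γ₁ = 0` and `|γ₂| = 1/(α+2)`, so that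
`|γ₂| - |γ₁| = 1/(α+2)`: the upper bound is sharp for every `α > 0`. -/
theorem stmt_3 (α : ℝ) (hα : 0 < α) :
    ∃ f h : ℂ → ℂ, BazilevicB1 α f h ∧
      (∀ z ∈ ball (0 : ℂ) 1,
        Complex.exp ((α - 1 : ℂ) * h z) * deriv f z = (1 + z ^ 2) / (1 - z ^ 2)) ∧
      coeff2 f = 0 ∧ coeff3 f = ((2 / (α + 2) : ℝ) : ℂ) ∧
      logCoeff1 h = 0 ∧ ‖logCoeff2 h‖ = 1 / (α + 2) ∧
      ‖logCoeff2 h‖ - ‖logCoeff1 h‖ = 1 / (α + 2) := by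
  obtain ⟨h1, h2, h3, h4, h5, h6, h7, h8, h9, h10, h11⟩ := SharpB1Aux.everything hα
  have hα2 : (α:ℂ) + 2 ≠ 0 := by
    have h := Complex.ofReal_ne_zero.2 (show α + 2 ≠ 0 by linarith)
    push_cast at h; exact h
  have hl1 : logCoeff1 (SharpB1Aux.hB α) = 0 := by rw [logCoeff1, h10]; simp
  have hl2 : logCoeff2 (SharpB1Aux.hB α) = ((1/(α+2) : ℝ) : ℂ) := by
    rw [logCoeff2, h11]
    push_cast
    field_simp
  have habs : ‖logCoeff2 (SharpB1Aux.hB α)‖ = 1/(α+2) := by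
    rw [hl2, Complex.norm_real, Real.norm_eq_abs, abs_of_pos (div_pos one_pos (by linarith))]
  refine ⟨SharpB1Aux.fB α, SharpB1Aux.hB α, ⟨h1, h2, h3, h4, h5, h6, ?_⟩, h7, ?_, ?_, hl1,
    habs, ?_⟩
  · intro z hz
    rw [h7 z hz]
    exact SharpB1Aux.re_frac_pos (SharpB1Aux.sq_norm_lt (mem_ball_zero_iff.mp hz))
  · rw [coeff2, h8]; simp
  · rw [coeff3, h9, Complex.ofReal_div]
    push_cast
    field_simp
    ring
  · rw [hl1, norm_zero, sub_zero]; exact habs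
end

section
/- Let α > 0 and let f ∈ B₁(α) with Taylor coefficients a₂, a₃. Then |a₂| ≤ 2/(α+1). -/
open Complex Metric

/-- For `α > 0` and `f ∈ B₁(α)`: `|a₂| ≤ 2/(α+1)`. -/
theorem stmt_5 (α : ℝ) (hα : 0 < α) (f h : ℂ → ℂ) (hf : BazilevicB1 α f h) :
    ‖coeff2 f‖ ≤ 2 / (α + 1) := by
  obtain ⟨hfa, hha, hf0, hf'0, hh0, hfeq, hre⟩ := hf
  have hopen : IsOpen (ball (0 : ℂ) 1) := isOpen_ball
  have h0mem : (0 : ℂ) ∈ ball (0 : ℂ) 1 := mem_ball_self one_pos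
  have hha' : AnalyticOnNhd ℂ (deriv h) (ball 0 1) := hha.deriv
  set d : ℂ := deriv h 0 with hd
  -- derivative of f on the ball
  have hderiv : ∀ z ∈ ball (0 : ℂ) 1,
      HasDerivAt f (Complex.exp (h z) * (1 + z * deriv h z)) z := by
    intro z hz
    have hhz : HasDerivAt h (deriv h z) z := (hha z hz).differentiableAt.hasDerivAt
    have h1 : HasDerivAt (fun w => w * Complex.exp (h w))
        (1 * Complex.exp (h z) + z * (Complex.exp (h z) * deriv h z)) z :=
      (hasDerivAt_id z).mul hhz.cexp
    have h2 : HasDerivAt f (1 * Complex.exp (h z) + z * (Complex.exp (h z) * deriv h z)) z := by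
      refine h1.congr_of_eventuallyEq ?_
      filter_upwards [hopen.mem_nhds hz] with w hw using (hfeq w hw)
    convert h2 using 1; ring
  have hderiv_eq : ∀ z ∈ ball (0 : ℂ) 1,
      deriv f z = Complex.exp (h z) * (1 + z * deriv h z) := fun z hz =>
    (hderiv z hz).deriv
  -- second derivative of f at 0
  have hdh0 : HasDerivAt (deriv h) (deriv (deriv h) 0) 0 :=
    (hha' 0 h0mem).differentiableAt.hasDerivAt
  have hh0' : HasDerivAt h d 0 := (hha 0 h0mem).differentiableAt.hasDerivAt
  have hphi : HasDerivAt (fun z => Complex.exp (h z) * (1 + z * deriv h z))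
      (Complex.exp (h 0) * d * (1 + 0 * deriv h 0)
        + Complex.exp (h 0) * (1 * deriv h 0 + 0 * deriv (deriv h) 0)) 0 := by
    exact hh0'.cexp.mul (((hasDerivAt_id 0).mul hdh0).const_add 1)
  have hphi' : HasDerivAt (fun z => Complex.exp (h z) * (1 + z * deriv h z)) (2 * d) 0 := by
    convert hphi using 1
    simp [hh0, ← hd]
    ring
  have hf2 : iteratedDeriv 2 f 0 = 2 * d := by
    rw [iteratedDeriv_succ, iteratedDeriv_one]
    have : deriv f =ᶠ[nhds (0 : ℂ)] fun z => Complex.exp (h z) * (1 + z * deriv h z) := by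
      filter_upwards [hopen.mem_nhds h0mem] with w hw using hderiv_eq w hw
    rw [this.deriv_eq]
    exact hphi'.deriv
  have hc2 : coeff2 f = d := by
    rw [coeff2, hf2]; ring
  -- the Carathéodory function g
  set g : ℂ → ℂ := fun z => Complex.exp ((α : ℂ) * h z) * (1 + z * deriv h z) with hg
  have hg0 : g 0 = 1 := by simp [hg, hh0]
  have hgval : ∀ z ∈ ball (0 : ℂ) 1,
      g z = Complex.exp ((α - 1 : ℂ) * h z) * deriv f z := by
    intro z hz
    rw [hderiv_eq z hz, hg]
    rw [← mul_assoc, ← Complex.exp_add]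
    ring_nf
  have hgre : ∀ z ∈ ball (0 : ℂ) 1, 0 < (g z).re := by
    intro z hz
    rw [hgval z hz]
    exact hre z hz
  -- differentiability of g on the ball
  have hgdiff : ∀ z ∈ ball (0 : ℂ) 1,
      HasDerivAt g (Complex.exp ((α : ℂ) * h z) * ((α : ℂ) * deriv h z) * (1 + z * deriv h z)
        + Complex.exp ((α : ℂ) * h z) * (1 * deriv h z + z * deriv (deriv h) z)) z := by
    intro z hz
    have hhz : HasDerivAt h (deriv h z) z := (hha z hz).differentiableAt.hasDerivAt
    have hdz : HasDerivAt (deriv h) (deriv (deriv h) z) z :=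
      (hha' z hz).differentiableAt.hasDerivAt
    exact ((hhz.const_mul (α : ℂ)).cexp).mul (((hasDerivAt_id z).mul hdz).const_add 1)
  have hgd0 : HasDerivAt g (((α : ℂ) + 1) * d) 0 := by
    have := hgdiff 0 h0mem
    convert this using 1
    simp [hh0, ← hd]
    ring
  -- the Schwarz map
  have hgne : ∀ z ∈ ball (0 : ℂ) 1, g z + 1 ≠ 0 := by
    intro z hz hcon
    have : (g z + 1).re = 0 := by rw [hcon]; simp
    simp only [Complex.add_re, Complex.one_re] at this
    have := hgre z hz; linarith
  set φ : ℂ → ℂ := fun z => (g z - 1) / (g z + 1) with hφ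
  have hφdiff : DifferentiableOn ℂ φ (ball 0 1) := by
    intro z hz
    exact (((((hgdiff z hz).differentiableAt.sub_const 1).div
      ((hgdiff z hz).differentiableAt.add_const 1) (hgne z hz))).differentiableWithinAt)
  have hφ0 : φ 0 = 0 := by simp [hφ, hg0]
  have hφmaps : Set.MapsTo φ (ball 0 1) (ball 0 1) := by
    intro z hz
    rw [mem_ball_zero_iff]
    have hlt : ‖g z - 1‖ < ‖g z + 1‖ := by
      have hsq : Complex.normSq (g z - 1) < Complex.normSq (g z + 1) := by
        have : Complex.normSq (g z + 1) - Complex.normSq (g z - 1) = 4 * (g z).re := by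
          simp [Complex.normSq_apply, Complex.add_re, Complex.add_im, Complex.sub_re,
            Complex.sub_im]
          ring
        nlinarith [hgre z hz]
      have := Real.sqrt_lt_sqrt (Complex.normSq_nonneg _) hsq
      simpa [Complex.norm_def] using this
    have hpos : 0 < ‖g z + 1‖ :=
      (norm_pos_iff.mpr (hgne z hz))
    rw [hφ]
    rw [norm_div]
    exact div_lt_one hpos |>.2 hlt
  have hφd0 : HasDerivAt φ (((α : ℂ) + 1) * d / 2) 0 := by
    have h1 : HasDerivAt (fun z => g z - 1) (((α : ℂ) + 1) * d) 0 := hgd0.sub_const 1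
    have h2 : HasDerivAt (fun z => g z + 1) (((α : ℂ) + 1) * d) 0 := hgd0.add_const 1
    have h3 : HasDerivAt (fun z => (g z - 1) / (g z + 1)) _ 0 := h1.div h2 (by rw [hg0]; norm_num)
    convert h3 using 1
    rw [hg0]
    ring_nf
  -- Schwarz lemma
  have hschwarz := Complex.norm_deriv_le_one_of_mapsTo_ball hφdiff (by rw [hφ0]; exact hφmaps.mono_right ball_subset_closedBall) one_pos
  rw [hφd0.deriv] at hschwarz
  -- conclude
  have hα1 : (0 : ℝ) < α + 1 := by linarith
  rw [hc2]
  have key : ‖((α : ℂ) + 1) * d‖ ≤ 2 := by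
    have := hschwarz
    rw [norm_div] at this
    simp only [Complex.norm_two] at this
    calc ‖((α : ℂ) + 1) * d‖ = ‖((α : ℂ) + 1) * d‖ / 2 * 2 := by ring
    _ ≤ 1 * 2 := by nlinarith [this]
    _ = 2 := by ring
  have habs : ‖((α : ℂ) + 1) * d‖ = (α + 1) * ‖d‖ := by
    rw [norm_mul]
    congr 1
    rw [show ((α : ℂ) + 1) = ((α + 1 : ℝ) : ℂ) by push_cast; ring]
    rw [Complex.norm_real, Real.norm_eq_abs, abs_of_pos hα1]
  rw [habs] at key
  rw [le_div_iff₀ hα1]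
  linarith
end

section
/- Let α > 0 and let f ∈ B₁(α) with Taylor coefficients a₂, a₃. Then |a₃ − a₂²/2| ≥ |a₂| − 2/√((α+1)² + 1). -/
open Complex Metric

private lemma mobius_normSq (a w : ℂ) :
    Complex.normSq (1 - (starRingEnd ℂ) a * w) - Complex.normSq (w - a)
      = (1 - Complex.normSq a) * (1 - Complex.normSq w) := by
  simp only [Complex.normSq_apply, Complex.sub_re, Complex.sub_im, Complex.mul_re,
    Complex.mul_im, Complex.one_re, Complex.one_im, Complex.conj_re, Complex.conj_im]
  ring

private lemma mobius_ne {a w : ℂ} (ha : ‖a‖ ≤ 1) (hw : ‖w‖ < 1) :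
    (1 : ℂ) - (starRingEnd ℂ) a * w ≠ 0 := by
  intro hc
  have h1 : ‖(starRingEnd ℂ) a * w‖ < 1 := by
    rw [norm_mul, Complex.norm_conj]
    calc ‖a‖ * ‖w‖ ≤ 1 * ‖w‖ := by
          exact mul_le_mul_of_nonneg_right ha (norm_nonneg _)
      _ < 1 := by simpa using hw
  have : (starRingEnd ℂ) a * w = 1 := by linear_combination -hc
  rw [this] at h1; simp at h1

private lemma mobius_lt_one {a w : ℂ} (ha : ‖a‖ < 1) (hw : ‖w‖ < 1) :
    ‖(w - a) * ((1 : ℂ) - (starRingEnd ℂ) a * w)⁻¹‖ < 1 := by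
  have hne := mobius_ne ha.le hw
  rw [norm_mul, norm_inv]
  rw [mul_inv_lt_iff₀ (by simpa using (norm_pos_iff.2 hne)), one_mul]
  have h1 : Complex.normSq (w - a) < Complex.normSq (1 - (starRingEnd ℂ) a * w) := by
    have := mobius_normSq a w
    have ha' : Complex.normSq a < 1 := by
      rw [← Complex.sq_norm]; nlinarith [norm_nonneg a]
    have hw' : Complex.normSq w < 1 := by
      rw [← Complex.sq_norm]; nlinarith [norm_nonneg w]
    nlinarith
  rw [← Complex.sq_norm, ← Complex.sq_norm] at h1
  exact lt_of_pow_lt_pow_left₀ 2 (norm_nonneg _) h1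

/-- Schwarz–Pick at the origin. -/
private lemma schwarzPick0 {g : ℂ → ℂ} (hg : DifferentiableOn ℂ g (ball 0 1))
    (hlt : ∀ z ∈ ball (0 : ℂ) 1, ‖g z‖ < 1) :
    ‖deriv g 0‖ ≤ 1 - (‖g 0‖) ^ 2 := by
  have h0 : (0 : ℂ) ∈ ball (0 : ℂ) 1 := by simp
  set a := g 0 with ha_def
  have ha : ‖a‖ < 1 := hlt 0 h0
  set u : ℂ → ℂ := fun z => (g z - a) * ((1 : ℂ) - (starRingEnd ℂ) a * g z)⁻¹ with hu_def
  have hune : ∀ z ∈ ball (0 : ℂ) 1, (1 : ℂ) - (starRingEnd ℂ) a * g z ≠ 0 :=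
    fun z hz => mobius_ne ha.le (hlt z hz)
  have hud : DifferentiableOn ℂ u (ball 0 1) := by
    apply DifferentiableOn.mul (hg.sub_const a)
    exact DifferentiableOn.inv ((differentiableOn_const _).sub
      ((differentiableOn_const _).mul hg)) hune
  have humaps : Set.MapsTo u (ball (0:ℂ) 1) (ball (u 0) 1) := by
    intro z hz
    have h1 : u 0 = 0 := by simp [hu_def, ← ha_def]
    rw [h1, mem_ball_zero_iff]
    exact mobius_lt_one ha (hlt z hz)
  have hd1 := Complex.norm_deriv_le_div_of_mapsTo_ball hud (humaps.mono_right ball_subset_closedBall) one_pos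
  -- compute deriv u 0
  have hga : DifferentiableAt ℂ g 0 := hg.differentiableAt (isOpen_ball.mem_nhds h0)
  have hne0 : (1 : ℂ) - (starRingEnd ℂ) a * a ≠ 0 := by
    simpa [← ha_def] using hune 0 h0
  have hder : HasDerivAt u (deriv g 0 * ((1 : ℂ) - (starRingEnd ℂ) a * a)⁻¹) 0 := by
    have h1 : HasDerivAt (fun z => g z - a) (deriv g 0) 0 := (hga.hasDerivAt).sub_const a
    have h2 : HasDerivAt (fun z => (1 : ℂ) - (starRingEnd ℂ) a * g z)
        (-((starRingEnd ℂ) a * deriv g 0)) 0 := by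
      simpa using ((hga.hasDerivAt.const_mul ((starRingEnd ℂ) a)).const_sub 1)
    have h3 := (h2.inv hne0)
    have := h1.mul h3
    refine this.congr_deriv ?_
    simp [← ha_def]
  rw [hder.deriv] at hd1
  have habs : ‖(1 : ℂ) - (starRingEnd ℂ) a * a‖ = 1 - (‖a‖)^2 := by
    have h5 : (1 : ℂ) - (starRingEnd ℂ) a * a = ((1 - Complex.normSq a : ℝ) : ℂ) := by
      rw [Complex.ofReal_sub, Complex.ofReal_one, ← Complex.mul_conj, mul_comm]
    rw [h5, Complex.norm_real, Real.norm_eq_abs, ← Complex.sq_norm]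
    exact _root_.abs_of_nonneg (by nlinarith [norm_nonneg a])
  rw [norm_mul, norm_inv, habs] at hd1
  have hpos : (0:ℝ) < 1 - (‖a‖)^2 := by nlinarith [norm_nonneg a]
  rw [mul_inv_le_iff₀ hpos] at hd1
  simpa using hd1

/-- coefficient extraction -/
private lemma coeff_two_eq {ω : ℂ → ℂ} {p : FormalMultilinearSeries ℂ ℂ ℂ}
    (hp : HasFPowerSeriesAt ω p 0) : p.coeff 2 = deriv (deriv ω) 0 / 2 := by
  obtain ⟨r, hr⟩ := hp
  have h := hr.factorial_smul (y := (1 : ℂ)) 2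
  have h2 : iteratedFDeriv ℂ 2 ω 0 (fun _ => (1:ℂ)) = iteratedDeriv 2 ω 0 := by
    rw [iteratedDeriv_eq_iteratedFDeriv]
  have h3 : iteratedDeriv 2 ω 0 = deriv (deriv ω) 0 := by
    rw [iteratedDeriv_succ, iteratedDeriv_one]
  rw [h2, h3] at h
  rw [eq_div_iff (two_ne_zero : (2:ℂ) ≠ 0), ← h]
  show p.coeff 2 * 2 = Nat.factorial 2 • p.coeff 2
  simp [Nat.factorial, nsmul_eq_mul]
  ring

private lemma caratheodory_step {ω : ℂ → ℂ} (hω : DifferentiableOn ℂ ω (ball 0 1))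
    (h0 : ω 0 = 0) (hlt : ∀ z ∈ ball (0 : ℂ) 1, ‖ω z‖ < 1) :
    ‖deriv (deriv ω) 0 / 2‖ ≤ 1 - (‖deriv ω 0‖) ^ 2 := by
  have hm : (0 : ℂ) ∈ ball (0 : ℂ) 1 := by simp
  obtain ⟨p, hp⟩ := (hω.analyticOnNhd isOpen_ball) 0 hm
  have hg : HasFPowerSeriesAt (dslope ω 0) p.fslope 0 :=
    hp.has_fpower_series_dslope_fslope
  set g : ℂ → ℂ := dslope ω 0 with hgdef
  have hg0 : g 0 = deriv ω 0 := dslope_same ω 0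
  have hgd : DifferentiableOn ℂ g (ball 0 1) := by
    intro z hz
    rcases eq_or_ne z 0 with rfl | hne
    · exact hg.analyticAt.differentiableAt.differentiableWithinAt
    · exact (differentiableWithinAt_dslope_of_ne hne).2 (hω z hz)
  have hble : ∀ z ∈ ball (0 : ℂ) 1, ‖g z‖ ≤ 1 := by
    intro z hz
    have hmaps : Set.MapsTo ω (ball (0:ℂ) 1) (ball (ω 0) 1) := by
      intro w hw; rw [h0, mem_ball_zero_iff]; exact hlt w hw
    have := Complex.norm_dslope_le_div_of_mapsTo_ball hω (hmaps.mono_right ball_subset_closedBall) hz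
    simpa using this
  have hderivg : deriv g 0 = deriv (deriv ω) 0 / 2 := by
    rw [hg.deriv, ← coeff_two_eq hp]
    show p.fslope.coeff 1 = p.coeff 2
    rw [FormalMultilinearSeries.coeff_fslope]
  rw [← hderivg, ← hg0]
  by_cases hcase : ∀ z ∈ ball (0 : ℂ) 1, ‖g z‖ < 1
  · exact schwarzPick0 hgd hcase
  · push_neg at hcase
    obtain ⟨z₀, hz₀, hge⟩ := hcase
    have hmax : IsMaxOn (norm ∘ g) (ball (0:ℂ) 1) z₀ := by
      intro z hz
      simp only [Function.comp_apply]
      exact le_trans (hble z hz) hge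
    have heq := Complex.eqOn_of_isPreconnected_of_isMaxOn_norm
      (convex_ball (0:ℂ) 1).isPreconnected isOpen_ball hgd hz₀ hmax
    have hd0 : deriv g 0 = 0 := by
      have hev : g =ᶠ[nhds (0:ℂ)] (fun _ => g z₀) :=
        Filter.eventuallyEq_of_mem (isOpen_ball.mem_nhds hm) heq
      rw [hev.deriv_eq, deriv_const]
    rw [hd0]
    simp only [norm_zero]
    nlinarith [hble 0 hm, norm_nonneg (g 0)]

private lemma halfplane_mobius {w : ℂ} (hw : 0 < w.re) :
    ‖(w - 1) * (w + 1)⁻¹‖ < 1 := by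
  have hne : w + 1 ≠ 0 := by
    intro hc
    have : (w + 1).re = 0 := by rw [hc]; simp
    simp only [Complex.add_re, Complex.one_re] at this
    linarith
  rw [norm_mul, norm_inv, mul_inv_lt_iff₀ (by simpa using norm_pos_iff.2 hne), one_mul]
  have h1 : Complex.normSq (w - 1) < Complex.normSq (w + 1) := by
    simp only [Complex.normSq_apply, Complex.sub_re, Complex.sub_im, Complex.add_re,
      Complex.add_im, Complex.one_re, Complex.one_im]
    nlinarith
  rw [← Complex.sq_norm, ← Complex.sq_norm] at h1
  exact lt_of_pow_lt_pow_left₀ 2 (norm_nonneg _) h1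


set_option maxHeartbeats 1000000 in
/-- For `α > 0` and `f ∈ B₁(α)`: `|a₃ - a₂²/2| ≥ |a₂| - 2/√((α+1)² + 1)`. -/
theorem stmt_9 (α : ℝ) (hα : 0 < α) (f h : ℂ → ℂ) (hf : BazilevicB1 α f h) :
    ‖coeff3 f - (coeff2 f) ^ 2 / 2‖ ≥
      ‖coeff2 f‖ - 2 / Real.sqrt ((α + 1) ^ 2 + 1) := by
  obtain ⟨hfa, hha, hf0, hf'0, hh0, hfeq, hre⟩ := hf
  set B : Set ℂ := ball 0 1 with hBdef
  have hBo : IsOpen B := isOpen_ball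
  have hm : (0 : ℂ) ∈ B := by simp [hBdef]
  set h1 : ℂ := deriv h 0 with hh1def
  set h2 : ℂ := deriv (deriv h) 0 with hh2def
  have hh1a : AnalyticOnNhd ℂ (deriv h) B := hha.deriv
  have hh2a : AnalyticOnNhd ℂ (deriv (deriv h)) B := hh1a.deriv
  have dh : ∀ z ∈ B, HasDerivAt h (deriv h z) z :=
    fun z hz => (hha z hz).differentiableAt.hasDerivAt
  have dh1 : ∀ z ∈ B, HasDerivAt (deriv h) (deriv (deriv h) z) z :=
    fun z hz => (hh1a z hz).differentiableAt.hasDerivAt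
  have dh2 : ∀ z ∈ B, HasDerivAt (deriv (deriv h)) (deriv (deriv (deriv h)) z) z :=
    fun z hz => (hh2a z hz).differentiableAt.hasDerivAt
  -- inner factor and its derivative
  have dinner : ∀ z ∈ B, HasDerivAt (fun w => 1 + w * deriv h w)
      (deriv h z + z * deriv (deriv h) z) z := by
    intro z hz
    have := ((hasDerivAt_id z).mul (dh1 z hz)).const_add 1
    simpa using this
  -- Step A : deriv f on B
  set F1 : ℂ → ℂ := fun z => Complex.exp (h z) * (1 + z * deriv h z) with hF1def
  have hderivf : ∀ z ∈ B, deriv f z = F1 z := by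
    intro z hz
    have hev : f =ᶠ[nhds z] fun w => w * Complex.exp (h w) :=
      Filter.eventuallyEq_of_mem (hBo.mem_nhds hz) fun w hw => hfeq w hw
    rw [hev.deriv_eq]
    have hd : HasDerivAt (fun w => w * Complex.exp (h w))
        (F1 z) z := by
      have := (hasDerivAt_id z).mul ((dh z hz).cexp)
      refine this.congr_deriv ?_
      simp [hF1def]; ring
    exact hd.deriv
  -- Step B : derivative of F1
  set F2 : ℂ → ℂ := fun z => Complex.exp (h z) *
      (deriv h z * (1 + z * deriv h z) + (deriv h z + z * deriv (deriv h) z)) with hF2def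
  have dF1 : ∀ z ∈ B, HasDerivAt F1 (F2 z) z := by
    intro z hz
    have := ((dh z hz).cexp).mul (dinner z hz)
    refine this.congr_deriv ?_
    simp only [hF2def]; ring
  have hderivF1 : ∀ z ∈ B, deriv F1 z = F2 z := fun z hz => (dF1 z hz).deriv
  have hderiv2f : ∀ z ∈ B, deriv (deriv f) z = F2 z := by
    intro z hz
    have hev : deriv f =ᶠ[nhds z] F1 :=
      Filter.eventuallyEq_of_mem (hBo.mem_nhds hz) fun w hw => hderivf w hw
    rw [hev.deriv_eq]; exact hderivF1 z hz
  -- coefficient a₂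
  have ha2 : coeff2 f = h1 := by
    have : iteratedDeriv 2 f 0 = deriv (deriv f) 0 := by
      rw [iteratedDeriv_succ, iteratedDeriv_one]
    rw [coeff2, this, hderiv2f 0 hm]
    simp [hF2def, hh0, hh1def]
  -- deriv of F2 at 0
  have dF2 : HasDerivAt F2 (3 * h1 ^ 2 + 3 * h2) 0 := by
    have hq : HasDerivAt (fun z : ℂ => deriv h z * (1 + z * deriv h z)
        + (deriv h z + z * deriv (deriv h) z))
        (deriv (deriv h) 0 * (1 + 0 * deriv h 0) + deriv h 0 * (deriv h 0 + 0 * deriv (deriv h) 0)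
          + (deriv (deriv h) 0 + (1 * deriv (deriv h) 0 + 0 * deriv (deriv (deriv h)) 0))) 0 := by
      exact ((dh1 0 hm).mul (dinner 0 hm)).add ((dh1 0 hm).add
        ((hasDerivAt_id 0).mul (dh2 0 hm)))
    have := ((dh 0 hm).cexp).mul hq
    refine this.congr_deriv ?_
    simp [hF2def, hh0, ← hh1def, ← hh2def]
    ring
  have ha3 : coeff3 f = (3 * h1 ^ 2 + 3 * h2) / 6 := by
    have e1 : iteratedDeriv 3 f 0 = deriv (deriv (deriv f)) 0 := by
      rw [iteratedDeriv_succ, iteratedDeriv_succ, iteratedDeriv_one]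
    have hev : deriv (deriv f) =ᶠ[nhds (0:ℂ)] F2 :=
      Filter.eventuallyEq_of_mem (hBo.mem_nhds hm) fun w hw => hderiv2f w hw
    rw [coeff3, e1, hev.deriv_eq, dF2.deriv]
  -- Step C : the Caratheodory function Gp
  set Gp : ℂ → ℂ := fun z => Complex.exp ((α : ℂ) * h z) * (1 + z * deriv h z) with hGpdef
  have hGp0 : Gp 0 = 1 := by simp [hGpdef, hh0]
  have hGppos : ∀ z ∈ B, 0 < (Gp z).re := by
    intro z hz
    have hkey : Complex.exp ((α - 1 : ℂ) * h z) * deriv f z = Gp z := by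
      rw [hderivf z hz, hF1def, ← mul_assoc, ← Complex.exp_add]
      have : ((α : ℂ) - 1) * h z + h z = (α : ℂ) * h z := by ring
      rw [this]
    rw [← hkey]
    exact hre z hz
  have dGpinner : ∀ z ∈ B, HasDerivAt (fun w => Complex.exp ((α : ℂ) * h w))
      (Complex.exp ((α : ℂ) * h z) * ((α : ℂ) * deriv h z)) z := by
    intro z hz
    exact ((dh z hz).const_mul ((α : ℂ))).cexp
  set Gp1 : ℂ → ℂ := fun z => Complex.exp ((α : ℂ) * h z) *
      ((α : ℂ) * deriv h z * (1 + z * deriv h z) + (deriv h z + z * deriv (deriv h) z)) with hGp1def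
  have dGp : ∀ z ∈ B, HasDerivAt Gp (Gp1 z) z := by
    intro z hz
    have := (dGpinner z hz).mul (dinner z hz)
    refine this.congr_deriv ?_
    simp only [hGp1def]; ring
  have hGp10 : Gp1 0 = ((α : ℂ) + 1) * h1 := by
    simp [hGp1def, hh0]; ring
  set c2 : ℂ := ((α : ℂ) + 2) * h2 + (α : ℂ) * ((α : ℂ) + 2) * h1 ^ 2 with hc2def
  have dGp1 : HasDerivAt Gp1 c2 0 := by
    have hq : HasDerivAt (fun z : ℂ => (α : ℂ) * deriv h z * (1 + z * deriv h z)
        + (deriv h z + z * deriv (deriv h) z))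
        ((α : ℂ) * deriv (deriv h) 0 * (1 + 0 * deriv h 0)
          + (α : ℂ) * deriv h 0 * (deriv h 0 + 0 * deriv (deriv h) 0)
          + (deriv (deriv h) 0 + (1 * deriv (deriv h) 0 + 0 * deriv (deriv (deriv h)) 0))) 0 :=
      (((dh1 0 hm).const_mul ((α:ℂ))).mul (dinner 0 hm)).add ((dh1 0 hm).add
        ((hasDerivAt_id 0).mul (dh2 0 hm)))
    have := (dGpinner 0 hm).mul hq
    refine this.congr_deriv ?_
    simp [hc2def, hh0, ← hh1def, ← hh2def]
    ring
  -- Step D : the function ω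
  have hne : ∀ z ∈ B, Gp z + 1 ≠ 0 := by
    intro z hz hc
    have : (Gp z + 1).re = 0 := by rw [hc]; simp
    simp only [Complex.add_re, Complex.one_re] at this
    linarith [hGppos z hz]
  set ω : ℂ → ℂ := fun z => (Gp z - 1) * (Gp z + 1)⁻¹ with hωdef
  have hω0 : ω 0 = 0 := by simp [hωdef, hGp0]
  have hωlt : ∀ z ∈ B, ‖ω z‖ < 1 :=
    fun z hz => halfplane_mobius (hGppos z hz)
  set W : ℂ → ℂ := fun z => Gp1 z * (Gp z + 1)⁻¹
      + (Gp z - 1) * (-Gp1 z * (((Gp z + 1) ^ 2)⁻¹)) with hWdef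
  have dω : ∀ z ∈ B, HasDerivAt ω (W z) z := by
    intro z hz
    have hinv : HasDerivAt (fun w => (Gp w + 1)⁻¹)
        (-Gp1 z / (Gp z + 1) ^ 2) z := ((dGp z hz).add_const 1).inv (hne z hz)
    exact ((dGp z hz).sub_const 1).mul hinv
  have hωd : DifferentiableOn ℂ ω B :=
    fun z hz => (dω z hz).differentiableAt.differentiableWithinAt
  have hderivω : ∀ z ∈ B, deriv ω z = W z := fun z hz => (dω z hz).deriv
  have hderivω0 : deriv ω 0 = ((α : ℂ) + 1) * h1 / 2 := by
    rw [hderivω 0 hm]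
    simp [hWdef, hGp0, hGp10]
    ring
  -- second derivative of ω at 0
  have dW : HasDerivAt W (c2 / 2 - (((α : ℂ) + 1) * h1) ^ 2 / 2) 0 := by
    have hinv : HasDerivAt (fun w => (Gp w + 1)⁻¹)
        (-Gp1 0 / (Gp 0 + 1) ^ 2) 0 := ((dGp 0 hm).add_const 1).inv (hne 0 hm)
    have hsq : HasDerivAt (fun w => ((Gp w + 1) ^ 2)⁻¹)
        (-(2 * (Gp 0 + 1) * Gp1 0) / ((Gp 0 + 1) ^ 2) ^ 2) 0 := by
      have hpow : HasDerivAt (fun w => (Gp w + 1) ^ 2)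
          (2 * (Gp 0 + 1) ^ 1 * Gp1 0) 0 := ((dGp 0 hm).add_const 1).pow 2
      have := hpow.inv (pow_ne_zero 2 (hne 0 hm))
      refine this.congr_deriv ?_
      ring
    have h5 : HasDerivAt (fun w => -Gp1 w * (((Gp w + 1) ^ 2)⁻¹))
        ((-c2) * (((Gp 0 + 1) ^ 2)⁻¹)
          + (-Gp1 0) * (-(2 * (Gp 0 + 1) * Gp1 0) / ((Gp 0 + 1) ^ 2) ^ 2)) 0 :=
      (dGp1.neg).mul hsq
    have hmain := (dGp1.mul hinv).add (((dGp 0 hm).sub_const 1).mul h5)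
    refine hmain.congr_deriv ?_
    rw [hGp0, hGp10]
    norm_num
    ring
  have hderiv2ω : deriv (deriv ω) 0 = c2 / 2 - (((α : ℂ) + 1) * h1) ^ 2 / 2 := by
    have hev : deriv ω =ᶠ[nhds (0:ℂ)] W :=
      Filter.eventuallyEq_of_mem (hBo.mem_nhds hm) fun w hw => hderivω w hw
    rw [hev.deriv_eq, dW.deriv]
  -- apply the Caratheodory coefficient bound
  have hkey := caratheodory_step hωd hω0 hωlt
  rw [hderivω0, hderiv2ω] at hkey
  have hcast1 : ((α:ℂ)+1) = ((α+1:ℝ):ℂ) := by push_cast; ring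
  have hcast2 : ((α:ℂ)+2) = ((α+2:ℝ):ℂ) := by push_cast; ring
  have habs1 : ‖((α:ℂ)+1)*h1/2‖ = (α+1)*(‖h1‖)/2 := by
    rw [norm_div, norm_mul, hcast1, Complex.norm_real, Real.norm_eq_abs,
      _root_.abs_of_pos (by linarith : (0:ℝ) < α+1)]
    norm_num
  have e1 : (c2/2 - (((α:ℂ)+1)*h1)^2/2)/2 = (((α:ℂ)+2)*h2 - h1^2)/4 := by
    rw [hc2def]; push_cast; ring
  have habs2 : ‖(((α:ℂ)+2)*h2 - h1^2)/4‖
      = ‖((α:ℂ)+2)*h2 - h1^2‖/4 := by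
    rw [norm_div]; norm_num
  rw [e1, habs2, habs1] at hkey
  have hkey2 : ‖((α:ℂ)+2)*h2 - h1^2‖
      ≤ 4 - (α+1)^2*(‖h1‖)^2 := by nlinarith [hkey]
  have htri : (‖h1‖)^2 ≤ (α+2)*(‖h2‖)
      + ‖((α:ℂ)+2)*h2 - h1^2‖ := by
    have h6 := norm_sub_le (((α:ℂ)+2)*h2) ((((α:ℂ)+2)*h2) - h1^2)
    rw [sub_sub_cancel] at h6
    rw [norm_mul, hcast2, Complex.norm_real, Real.norm_eq_abs,
      _root_.abs_of_pos (by linarith : (0:ℝ) < α+2)] at h6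
    rw [← hcast2] at h6
    calc (‖h1‖)^2 = ‖h1^2‖ := by rw [norm_pow]
      _ ≤ _ := h6
  -- rewrite the goal
  rw [ha3, ha2]
  have e2 : (3*h1^2+3*h2)/6 - h1^2/2 = h2/2 := by ring
  rw [e2]
  have habs3 : ‖h2/2‖ = (‖h2‖)/2 := by rw [norm_div]; norm_num
  rw [habs3]
  set s : ℝ := Real.sqrt ((α+1)^2+1) with hsdef
  have hs2 : s^2 = (α+1)^2+1 := Real.sq_sqrt (by positivity)
  have hspos : 0 < s := Real.sqrt_pos.2 (by positivity)
  have hA' : s^2*(‖h1‖)^2 - 4 ≤ (α+2)*(‖h2‖) := by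
    rw [hs2]; nlinarith [htri, hkey2]
  have ht0 : 0 ≤ ‖h1‖ := norm_nonneg _
  have hy0 : 0 ≤ ‖h2‖ := norm_nonneg _
  rcases le_or_gt ((‖h1‖)*s) 2 with hle | hlt
  · have h7 : ‖h1‖ ≤ 2/s := (le_div_iff₀ hspos).2 hle
    linarith
  · have hsge : α + 1 ≤ s := by
      have h8 : α+1 = Real.sqrt ((α+1)^2) := (Real.sqrt_sq (by linarith)).symm
      rw [hsdef]
      nth_rewrite 1 [h8]
      exact Real.sqrt_le_sqrt (by linarith)
    have hfac1 : 0 ≤ (‖h1‖)*s - 2 := by linarith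
    have hfac2 : 0 ≤ s^2*(‖h1‖) + 2*s - 2*(α+2) := by
      have h9 : 0 ≤ s*((‖h1‖)*s - 2) := mul_nonneg hspos.le hfac1
      nlinarith [h9, hsge, hα]
    have hfac : 0 ≤ ((‖h1‖)*s-2)*(s^2*(‖h1‖) + 2*s - 2*(α+2)) :=
      mul_nonneg hfac1 hfac2
    have hsy : s*(s^2*(‖h1‖)^2-4) ≤ s*((α+2)*(‖h2‖)) :=
      mul_le_mul_of_nonneg_left hA' hspos.le
    have hgoal : ((‖h1‖) - 2/s) * (2*s*(α+2))
        ≤ ((‖h2‖)/2) * (2*s*(α+2)) := by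
      have e3 : ((‖h1‖) - 2/s) * (2*s*(α+2))
          = 2*(α+2)*((‖h1‖)*s) - 4*(α+2) := by
        field_simp; ring
      have e4 : ((‖h2‖)/2) * (2*s*(α+2)) = s*((α+2)*(‖h2‖)) := by ring
      rw [e3, e4]
      nlinarith [hsy, hfac]
    exact le_of_mul_le_mul_right hgoal (by positivity)
end

section
/- Let α > 0 and let f ∈ B₁(α) with Taylor coefficients a₂, a₃. If |a₂| ≥ 2/√((α+1)² + 1), then |a₃ − a₂²/2| ≥ (((α+1)² + 1)/(2(α+2))) |a₂|² − 2/(α+2). -/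
open Complex Metric

open Filter Set Function

section Helpers

theorem myAnalyticAt_deriv {A : ℂ → ℂ} {x : ℂ} (hA : AnalyticAt ℂ A x) :
    AnalyticAt ℂ (deriv A) x := by
  have : AnalyticOnNhd ℂ A {y | AnalyticAt ℂ A y} := fun y hy => hy
  exact this.deriv x hA

theorem evq_iter {f g : ℂ → ℂ} {x : ℂ} (hfg : f =ᶠ[nhds x] g) (n : ℕ) :
    iteratedDeriv n f =ᶠ[nhds x] iteratedDeriv n g := by
  induction n with
  | zero => simpa using hfg
  | succ n ih => rw [iteratedDeriv_succ, iteratedDeriv_succ]; exact ih.deriv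

theorem deriv2_eq (f : ℂ → ℂ) (x : ℂ) : iteratedDeriv 2 f x = deriv (deriv f) x := by
  rw [iteratedDeriv_succ, iteratedDeriv_one]

theorem mul_deriv2 {A B : ℂ → ℂ} (hA : AnalyticAt ℂ A 0) (hB : AnalyticAt ℂ B 0) :
    iteratedDeriv 2 (fun z => A z * B z) 0 =
      iteratedDeriv 2 A 0 * B 0 + 2 * (deriv A 0 * deriv B 0) + A 0 * iteratedDeriv 2 B 0 := by
  have hev : deriv (fun z => A z * B z) =ᶠ[nhds 0]
      fun z => deriv A z * B z + A z * deriv B z := by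
    filter_upwards [hA.eventually_analyticAt, hB.eventually_analyticAt] with y hAy hBy
    exact deriv_mul hAy.differentiableAt hBy.differentiableAt
  rw [deriv2_eq, hev.deriv_eq,
    deriv_fun_add ((myAnalyticAt_deriv hA).fun_mul hB).differentiableAt
      (hA.fun_mul (myAnalyticAt_deriv hB)).differentiableAt,
    deriv_fun_mul (myAnalyticAt_deriv hA).differentiableAt hB.differentiableAt,
    deriv_fun_mul hA.differentiableAt (myAnalyticAt_deriv hB).differentiableAt,
    ← deriv2_eq, ← deriv2_eq]
  ring

theorem add_deriv2 {A B : ℂ → ℂ} (hA : AnalyticAt ℂ A 0) (hB : AnalyticAt ℂ B 0) :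
    iteratedDeriv 2 (fun z => A z + B z) 0 = iteratedDeriv 2 A 0 + iteratedDeriv 2 B 0 := by
  have hev : deriv (fun z => A z + B z) =ᶠ[nhds 0] fun z => deriv A z + deriv B z := by
    filter_upwards [hA.eventually_analyticAt, hB.eventually_analyticAt] with y hAy hBy
    exact deriv_add hAy.differentiableAt hBy.differentiableAt
  rw [deriv2_eq, hev.deriv_eq,
    deriv_fun_add (myAnalyticAt_deriv hA).differentiableAt (myAnalyticAt_deriv hB).differentiableAt,
    ← deriv2_eq, ← deriv2_eq]

theorem cm_deriv2 {c : ℂ} {A : ℂ → ℂ} (hA : AnalyticAt ℂ A 0) :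
    iteratedDeriv 2 (fun z => c * A z) 0 = c * iteratedDeriv 2 A 0 := by
  have hev : deriv (fun z => c * A z) =ᶠ[nhds 0] fun z => c * deriv A z := by
    filter_upwards [hA.eventually_analyticAt] with y hAy
    exact deriv_const_mul c hAy.differentiableAt
  rw [deriv2_eq, hev.deriv_eq, deriv_const_mul c (myAnalyticAt_deriv hA).differentiableAt,
    ← deriv2_eq]

theorem zmul_deriv2 {u : ℂ → ℂ} (hu : AnalyticAt ℂ u 0) :
    iteratedDeriv 2 (fun z => z * u z) 0 = 2 * deriv u 0 := by
  have h := mul_deriv2 (A := fun z => z) (analyticAt_id) hu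
  have h2 : iteratedDeriv 2 (fun z : ℂ => z) 0 = 0 := by
    rw [deriv2_eq]; simp
  rw [h, h2]; simp

theorem zmul_deriv3 {u : ℂ → ℂ} (hu : AnalyticAt ℂ u 0) :
    iteratedDeriv 3 (fun z => z * u z) 0 = 3 * iteratedDeriv 2 u 0 := by
  have hev : deriv (fun z => z * u z) =ᶠ[nhds 0] fun z => u z + z * deriv u z := by
    filter_upwards [hu.eventually_analyticAt] with y hy
    have := deriv_fun_mul (differentiableAt_id (x := y)) hy.differentiableAt (c := fun z : ℂ => z)
    simpa using this
  have : iteratedDeriv 3 (fun z => z * u z) 0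
      = iteratedDeriv 2 (fun z => u z + z * deriv u z) 0 := by
    rw [iteratedDeriv_succ']
    exact (evq_iter hev 2).eq_of_nhds
  have hB : AnalyticAt ℂ (fun z => z * deriv u z) 0 := analyticAt_id.mul (myAnalyticAt_deriv hu)
  rw [this, add_deriv2 hu hB,
    zmul_deriv2 (myAnalyticAt_deriv hu), ← deriv2_eq]
  ring

theorem cexp_deriv1 {v : ℂ → ℂ} (hv : DifferentiableAt ℂ v 0) :
    deriv (fun z => Complex.exp (v z)) 0 = Complex.exp (v 0) * deriv v 0 :=
  deriv_cexp hv

theorem cexp_deriv2 {v : ℂ → ℂ} (hv : AnalyticAt ℂ v 0) :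
    iteratedDeriv 2 (fun z => Complex.exp (v z)) 0 =
      Complex.exp (v 0) * ((deriv v 0) ^ 2 + iteratedDeriv 2 v 0) := by
  have hev : deriv (fun z => Complex.exp (v z)) =ᶠ[nhds 0]
      fun z => Complex.exp (v z) * deriv v z := by
    filter_upwards [hv.eventually_analyticAt] with y hy
    exact deriv_cexp hy.differentiableAt
  rw [deriv2_eq, hev.deriv_eq,
    deriv_fun_mul (c := fun z => Complex.exp (v z)) hv.cexp.differentiableAt (myAnalyticAt_deriv hv).differentiableAt,
    deriv_cexp hv.differentiableAt, ← deriv2_eq]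
  ring


-- Schwarz–Pick at the origin for maps bounded by 1 on the unit ball
theorem schwarz_pick0 {φ : ℂ → ℂ} (hφA : AnalyticOnNhd ℂ φ (ball 0 1))
    (hφle : ∀ z ∈ ball (0:ℂ) 1, ‖φ z‖ ≤ 1) :
    ‖deriv φ 0‖ ≤ 1 - ‖φ 0‖ ^ 2 := by
  have h0mem : (0:ℂ) ∈ ball (0:ℂ) 1 := mem_ball_self one_pos
  have hφd : DifferentiableOn ℂ φ (ball 0 1) := fun z hz =>
    (hφA z hz).differentiableAt.differentiableWithinAt
  by_cases hc : ∃ z₀ ∈ ball (0:ℂ) 1, ‖φ z₀‖ = 1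
  · obtain ⟨z₀, hz₀, hz₀1⟩ := hc
    have hmax : IsMaxOn (norm ∘ φ) (ball (0:ℂ) 1) z₀ := by
      intro z hz
      simp only [comp_apply, hz₀1]
      exact hφle z hz
    have heq := Complex.eqOn_of_isPreconnected_of_isMaxOn_norm
      (convex_ball (0:ℂ) 1).isPreconnected isOpen_ball hφd hz₀ hmax
    have hev : φ =ᶠ[nhds 0] fun _ => φ z₀ := by
      filter_upwards [isOpen_ball.mem_nhds h0mem] with y hy
      exact heq hy
    have hd0 : deriv φ 0 = 0 := by
      rw [hev.deriv_eq]; simp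
    have hφ0 : ‖φ 0‖ = 1 := by
      rw [heq h0mem]; exact hz₀1
    rw [hd0, hφ0]; simp
  · push_neg at hc
    have hlt : ∀ z ∈ ball (0:ℂ) 1, ‖φ z‖ < 1 := fun z hz =>
      lt_of_le_of_ne (hφle z hz) (hc z hz)
    set a := φ 0 with ha_def
    have ha : ‖a‖ < 1 := hlt 0 h0mem
    have hnsa : Complex.normSq a < 1 := by
      rw [← Complex.sq_norm]; nlinarith [norm_nonneg a]
    set F : ℂ → ℂ := fun z => (φ z - a) * (1 - (starRingEnd ℂ) a * φ z)⁻¹ with hF_def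
    have hden : ∀ z ∈ ball (0:ℂ) 1, (1 : ℂ) - (starRingEnd ℂ) a * φ z ≠ 0 := by
      intro z hz h
      have h1 : (1:ℂ) = (starRingEnd ℂ) a * φ z := by linear_combination h
      have : (1:ℝ) = ‖(starRingEnd ℂ) a * φ z‖ := by rw [← h1]; simp
      rw [norm_mul, Complex.norm_conj] at this
      nlinarith [hlt z hz, norm_nonneg a, norm_nonneg (φ z), ha]
    have hFd : DifferentiableOn ℂ F (ball 0 1) := by
      intro z hz
      exact (((hφd z hz).sub_const a).mul
        (((differentiableWithinAt_const _).sub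
          ((differentiableWithinAt_const _).mul (hφd z hz))).inv (hden z hz)))
    have hF0 : F 0 = 0 := by simp [hF_def, ha_def]
    have hkey : ∀ z ∈ ball (0:ℂ) 1,
        Complex.normSq (φ z - a) < Complex.normSq (1 - (starRingEnd ℂ) a * φ z) := by
      intro z hz
      have hx : Complex.normSq (φ z) < 1 := by
        rw [← Complex.sq_norm]; nlinarith [norm_nonneg (φ z), hlt z hz]
      have hid : Complex.normSq (1 - (starRingEnd ℂ) a * φ z) - Complex.normSq (φ z - a)
          = (1 - Complex.normSq a) * (1 - Complex.normSq (φ z)) := by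
        simp only [Complex.normSq_apply, Complex.sub_re, Complex.sub_im, Complex.mul_re,
          Complex.mul_im, Complex.one_re, Complex.one_im, Complex.conj_re, Complex.conj_im]
        ring
      nlinarith
    have hFmaps : MapsTo F (ball (0:ℂ) 1) (ball (F 0) 1) := by
      intro z hz
      rw [hF0, mem_ball_zero_iff]
      have h2 := hkey z hz
      have h3 : ‖φ z - a‖ < ‖1 - (starRingEnd ℂ) a * φ z‖ := by
        have e1 := Complex.sq_norm (φ z - a)
        have e2 := Complex.sq_norm (1 - (starRingEnd ℂ) a * φ z)
        nlinarith [norm_nonneg (φ z - a),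
          norm_nonneg (1 - (starRingEnd ℂ) a * φ z)]
      have h4 : ‖1 - (starRingEnd ℂ) a * φ z‖ > 0 :=
        norm_pos_iff.mpr (hden z hz)
      rw [hF_def]
      simp only [norm_mul, norm_inv]
      rw [mul_inv_lt_iff₀ h4]  -- maybe wrong name
      simpa using h3
    have habs := Complex.norm_deriv_le_div_of_mapsTo_ball hFd (hFmaps.mono_right ball_subset_closedBall) one_pos
    -- compute deriv F 0
    have hφ0' : HasDerivAt φ (deriv φ 0) 0 := (hφA 0 h0mem).differentiableAt.hasDerivAt
    have hdenA : HasDerivAt (fun z => (1:ℂ) - (starRingEnd ℂ) a * φ z)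
        (-((starRingEnd ℂ) a * deriv φ 0)) 0 := (hφ0'.const_mul _).const_sub 1
    have hinv : HasDerivAt (fun z => ((1:ℂ) - (starRingEnd ℂ) a * φ z)⁻¹)
        (-(-((starRingEnd ℂ) a * deriv φ 0)) / ((1:ℂ) - (starRingEnd ℂ) a * φ 0)^2) 0 :=
      hdenA.inv (hden 0 h0mem)
    have hFder : HasDerivAt F
        (deriv φ 0 * ((1:ℂ) - (starRingEnd ℂ) a * φ 0)⁻¹ +
          (φ 0 - a) * (-(-((starRingEnd ℂ) a * deriv φ 0)) /
            ((1:ℂ) - (starRingEnd ℂ) a * φ 0)^2)) 0 :=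
      (hφ0'.sub_const a).mul hinv
    have hderF : deriv F 0 = deriv φ 0 * ((1:ℂ) - (starRingEnd ℂ) a * a)⁻¹ := by
      rw [hFder.deriv, ← ha_def]
      simp
    have hcja : (starRingEnd ℂ) a * a = (Complex.normSq a : ℂ) := by
      rw [mul_comm, Complex.mul_conj]
    have habs2 : ‖deriv F 0‖
        = ‖deriv φ 0‖ * (1 - Complex.normSq a)⁻¹ := by
      rw [hderF, hcja, norm_mul, norm_inv]
      congr 1
      have : ((1:ℂ) - (Complex.normSq a : ℂ)) = ((1 - Complex.normSq a : ℝ) : ℂ) := by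
        push_cast; ring
      rw [this, Complex.norm_real, Real.norm_eq_abs, abs_of_pos (by linarith)]
    have hpos : (0:ℝ) < 1 - Complex.normSq a := by linarith
    have : ‖deriv φ 0‖ ≤ 1 - Complex.normSq a := by
      have h1 : ‖deriv φ 0‖ * (1 - Complex.normSq a)⁻¹ ≤ 1 := by
        rw [← habs2]; simpa using habs
      calc ‖deriv φ 0‖
          = ‖deriv φ 0‖ * (1 - Complex.normSq a)⁻¹ * (1 - Complex.normSq a) := by
            field_simp
        _ ≤ 1 * (1 - Complex.normSq a) := by
            exact mul_le_mul_of_nonneg_right h1 (le_of_lt hpos)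
        _ = 1 - Complex.normSq a := one_mul _
    rw [← Complex.sq_norm] at this
    exact this

theorem carath {q : ℂ → ℂ} (hq : AnalyticOnNhd ℂ q (ball 0 1)) (hq0 : q 0 = 1)
    (hre : ∀ z ∈ ball (0:ℂ) 1, 0 < (q z).re) :
    ‖iteratedDeriv 2 q 0 / 2 - (deriv q 0) ^ 2 / 2‖ ≤
      2 - (‖deriv q 0‖) ^ 2 / 2 := by
  have h0mem : (0:ℂ) ∈ ball (0:ℂ) 1 := mem_ball_self one_pos
  have hqa : AnalyticAt ℂ q 0 := hq 0 h0mem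
  have hne : ∀ z ∈ ball (0:ℂ) 1, q z + 1 ≠ 0 := by
    intro z hz h
    have h2 : (q z + 1).re = 0 := by rw [h]; simp
    rw [Complex.add_re, Complex.one_re] at h2
    nlinarith [hre z hz]
  set w : ℂ → ℂ := fun z => (q z - 1) * (q z + 1)⁻¹ with hw_def
  have hwA : AnalyticOnNhd ℂ w (ball 0 1) := fun z hz =>
    ((hq z hz).sub analyticAt_const).mul (((hq z hz).add analyticAt_const).inv (hne z hz))
  have hw0 : w 0 = 0 := by simp [hw_def, hq0]
  have hwd : DifferentiableOn ℂ w (ball 0 1) := fun z hz =>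
    (hwA z hz).differentiableAt.differentiableWithinAt
  have hmaps : MapsTo w (ball (0:ℂ) 1) (ball (w 0) 1) := by
    intro z hz
    rw [hw0, mem_ball_zero_iff]
    have hkey : Complex.normSq (q z - 1) < Complex.normSq (q z + 1) := by
      have hid : Complex.normSq (q z + 1) - Complex.normSq (q z - 1) = 4 * (q z).re := by
        simp only [Complex.normSq_apply, Complex.add_re, Complex.add_im, Complex.sub_re,
          Complex.sub_im, Complex.one_re, Complex.one_im]
        ring
      nlinarith [hre z hz]
    have h3 : ‖q z - 1‖ < ‖q z + 1‖ := by
      have e1 := Complex.sq_norm (q z - 1)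
      have e2 := Complex.sq_norm (q z + 1)
      nlinarith [norm_nonneg (q z - 1), norm_nonneg (q z + 1)]
    have h4 : 0 < ‖q z + 1‖ := norm_pos_iff.mpr (hne z hz)
    simp only [hw_def, norm_mul, norm_inv]
    rw [mul_inv_lt_iff₀ h4]
    simpa using h3
  set φ := dslope w 0 with hφ_def
  have hφd : DifferentiableOn ℂ φ (ball 0 1) :=
    (Complex.differentiableOn_dslope (ball_mem_nhds _ one_pos)).mpr hwd
  have hφA : AnalyticOnNhd ℂ φ (ball 0 1) := hφd.analyticOnNhd isOpen_ball
  have hφle : ∀ z ∈ ball (0:ℂ) 1, ‖φ z‖ ≤ 1 := by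
    intro z hz
    have := Complex.norm_dslope_le_div_of_mapsTo_ball hwd (hmaps.mono_right ball_subset_closedBall) hz
    simpa using this
  have hSP := schwarz_pick0 hφA hφle
  -- φ 0 = deriv w 0 = deriv q 0 / 2
  have hq0' : HasDerivAt q (deriv q 0) 0 := hqa.differentiableAt.hasDerivAt
  have hqne : q 0 + 1 ≠ 0 := hne 0 h0mem
  have h2 : HasDerivAt (fun z => (q z + 1)⁻¹) (-(deriv q 0) / (q 0 + 1) ^ 2) 0 :=
    (hq0'.add_const 1).inv hqne
  have hw' : HasDerivAt w (deriv q 0 * (q 0 + 1)⁻¹ +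
      (q 0 - 1) * (-(deriv q 0) / (q 0 + 1) ^ 2)) 0 := (hq0'.sub_const 1).mul h2
  have hderivw : deriv w 0 = deriv q 0 / 2 := by
    rw [hw'.deriv, hq0]
    norm_num
    ring
  have hφ0 : φ 0 = deriv q 0 / 2 := by rw [hφ_def, dslope_same]; exact hderivw
  -- w z = z * φ z
  have hzφ : w = fun z => z * φ z := by
    funext z
    have := sub_smul_dslope w 0 z
    simp only [sub_zero, smul_eq_mul, hw0] at this
    rw [← this]
  -- iteratedDeriv 2 w 0 = 2 * deriv φ 0
  have hi2w : iteratedDeriv 2 w 0 = 2 * deriv φ 0 := by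
    rw [hzφ]; exact zmul_deriv2 (hφA 0 h0mem)
  -- iteratedDeriv 2 w 0 via q
  have hqd : AnalyticAt ℂ (fun z => q z - 1) 0 := hqa.sub analyticAt_const
  have hBA : AnalyticAt ℂ (fun z => (q z + 1)⁻¹) 0 :=
    (hqa.add analyticAt_const).inv hqne
  have hmul := mul_deriv2 hqd hBA
  have hA0 : (fun z => q z - 1) 0 - 0 = 0 := by simp [hq0]
  have hi2A : iteratedDeriv 2 (fun z => q z - 1) 0 = iteratedDeriv 2 q 0 := by
    rw [deriv2_eq, deriv2_eq]
    congr 1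
    funext y
    exact deriv_sub_const 1
  have hdA : deriv (fun z => q z - 1) 0 = deriv q 0 := deriv_sub_const 1
  have hdB : deriv (fun z => (q z + 1)⁻¹) 0 = -(deriv q 0) / 4 := by
    rw [h2.deriv, hq0]; norm_num
  -- second derivative of B
  have hevB : deriv (fun z => (q z + 1)⁻¹) =ᶠ[nhds 0]
      fun z => -(deriv q z) * ((q z + 1) ^ 2)⁻¹ := by
    have hne' : ∀ᶠ y in nhds 0, q y + 1 ≠ 0 :=
      (hqa.continuousAt.add continuousAt_const).eventually_ne hqne
    filter_upwards [hqa.eventually_analyticAt, hne'] with y hy hyne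
    have hqy : HasDerivAt q (deriv q y) y := hy.differentiableAt.hasDerivAt
    have := ((hqy.add_const 1).inv hyne).deriv
    rw [show (fun z => (q z + 1)⁻¹) = (fun x => q x + 1)⁻¹ from rfl, this]; ring
  have hi2B : iteratedDeriv 2 (fun z => (q z + 1)⁻¹) 0
      = -(iteratedDeriv 2 q 0) / 4 + (deriv q 0) ^ 2 / 4 := by
    rw [deriv2_eq, hevB.deriv_eq]
    have hdq : HasDerivAt (deriv q) (deriv (deriv q) 0) 0 :=
      (myAnalyticAt_deriv hqa).differentiableAt.hasDerivAt
    have hpow : HasDerivAt (fun z => (q z + 1) ^ 2) (2 * (q 0 + 1) ^ 1 * deriv q 0) 0 := by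
      simpa using (hq0'.add_const 1).fun_pow 2
    have hpowne : (q 0 + 1) ^ 2 ≠ 0 := pow_ne_zero 2 hqne
    have hinv2 : HasDerivAt (fun z => ((q z + 1) ^ 2)⁻¹)
        (-(2 * (q 0 + 1) ^ 1 * deriv q 0) / ((q 0 + 1) ^ 2) ^ 2) 0 := hpow.inv hpowne
    have hG : HasDerivAt (fun z => -(deriv q z) * ((q z + 1) ^ 2)⁻¹)
        (-(deriv (deriv q) 0) * ((q 0 + 1) ^ 2)⁻¹ +
          -(deriv q 0) * (-(2 * (q 0 + 1) ^ 1 * deriv q 0) / ((q 0 + 1) ^ 2) ^ 2)) 0 :=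
      hdq.neg.mul hinv2
    rw [hG.deriv, hq0, ← deriv2_eq]
    norm_num
    ring
  -- combine
  have hwval : iteratedDeriv 2 w 0
      = iteratedDeriv 2 q 0 / 2 - (deriv q 0) ^ 2 / 2 := by
    have hrfl : iteratedDeriv 2 w 0
        = iteratedDeriv 2 (fun z => (q z - 1) * (q z + 1)⁻¹) 0 := rfl
    rw [hrfl, hmul, hi2A, hdA, hdB, hi2B, hq0]
    have h11 : (1:ℂ) + 1 = 2 := by norm_num
    rw [h11]
    field_simp
    ring
  have e1 : iteratedDeriv 2 q 0 / 2 - (deriv q 0) ^ 2 / 2 = 2 * deriv φ 0 :=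
    (hi2w.symm.trans hwval).symm
  have habsφ0 : ‖φ 0‖ = ‖deriv q 0‖ / 2 := by
    rw [hφ0, norm_div, Complex.norm_two]
  rw [e1, norm_mul, Complex.norm_two]
  nlinarith [hSP, habsφ0, norm_nonneg (deriv φ 0), norm_nonneg (deriv q 0)]

end Helpers

/-- For `α > 0` and `f ∈ B₁(α)` with `|a₂| ≥ 2/√((α+1)² + 1)`:
`|a₃ - a₂²/2| ≥ (((α+1)² + 1)/(2(α+2))) |a₂|² - 2/(α+2)`. -/
theorem stmt_10 (α : ℝ) (hα : 0 < α) (f h : ℂ → ℂ) (hf : BazilevicB1 α f h)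
    (ha2 : ‖coeff2 f‖ ≥ 2 / Real.sqrt ((α + 1) ^ 2 + 1)) :
    ‖coeff3 f - (coeff2 f) ^ 2 / 2‖ ≥
      (((α + 1) ^ 2 + 1) / (2 * (α + 2))) * ‖coeff2 f‖ ^ 2
        - 2 / (α + 2) := by
  obtain ⟨hfA, hhA, hf0, hf'0, hh0, hfeq, hre⟩ := hf
  have h0mem : (0:ℂ) ∈ ball (0:ℂ) 1 := mem_ball_self one_pos
  have hha : AnalyticAt ℂ h 0 := hhA 0 h0mem
  set H1 := deriv h 0 with hH1
  set H2 := iteratedDeriv 2 h 0 with hH2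
  have hH2' : H2 = deriv (deriv h) 0 := deriv2_eq h 0
  -- f agrees with g near 0
  have hfg : f =ᶠ[nhds 0] fun z => z * Complex.exp (h z) := by
    filter_upwards [isOpen_ball.mem_nhds h0mem] with y hy
    exact hfeq y hy
  -- derivatives of u = exp ∘ h
  have hua : AnalyticAt ℂ (fun z => Complex.exp (h z)) 0 := hha.cexp
  have hdu : deriv (fun z => Complex.exp (h z)) 0 = H1 := by
    rw [deriv_cexp hha.differentiableAt, hh0, Complex.exp_zero, one_mul]
  have hi2u : iteratedDeriv 2 (fun z => Complex.exp (h z)) 0 = H1 ^ 2 + H2 := by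
    rw [cexp_deriv2 hha, hh0, Complex.exp_zero, one_mul]
  -- coefficients of f
  have hc2 : coeff2 f = H1 := by
    rw [coeff2, (evq_iter hfg 2).eq_of_nhds, zmul_deriv2 hua, hdu]
    ring
  have hc3 : coeff3 f = (H1 ^ 2 + H2) / 2 := by
    rw [coeff3, (evq_iter hfg 3).eq_of_nhds, zmul_deriv3 hua, hi2u]
    ring
  have hLHS : coeff3 f - (coeff2 f) ^ 2 / 2 = H2 / 2 := by
    rw [hc2, hc3]; ring
  -- the function q with positive real part
  have hqA : AnalyticOnNhd ℂ (fun z => (1 + z * deriv h z) * Complex.exp ((α:ℂ) * h z))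
      (ball 0 1) := by
    intro z hz
    exact (analyticAt_const.add (analyticAt_id.mul ((hhA.deriv) z hz))).mul
      ((analyticAt_const.mul (hhA z hz)).cexp)
  have hq0 : (1 + (0:ℂ) * deriv h 0) * Complex.exp ((α:ℂ) * h 0) = 1 := by
    rw [hh0]; simp
  have hgd : ∀ z ∈ ball (0:ℂ) 1, deriv f z = (1 + z * deriv h z) * Complex.exp (h z) := by
    intro z hz
    have hev : f =ᶠ[nhds z] fun y => y * Complex.exp (h y) := by
      filter_upwards [isOpen_ball.mem_nhds hz] with y hy
      exact hfeq y hy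
    rw [hev.deriv_eq]
    have hhz : HasDerivAt h (deriv h z) z := (hhA z hz).differentiableAt.hasDerivAt
    have hg' : HasDerivAt (fun y => y * Complex.exp (h y))
        (1 * Complex.exp (h z) + z * (Complex.exp (h z) * deriv h z)) z :=
      (hasDerivAt_id z).mul hhz.cexp
    rw [hg'.deriv]; ring
  have hre' : ∀ z ∈ ball (0:ℂ) 1,
      0 < ((fun z => (1 + z * deriv h z) * Complex.exp ((α:ℂ) * h z)) z).re := by
    intro z hz
    have heq : (1 + z * deriv h z) * Complex.exp ((α:ℂ) * h z)
        = Complex.exp (((α:ℂ) - 1) * h z) * deriv f z := by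
      rw [hgd z hz, show ((α:ℂ) * h z) = (((α:ℂ) - 1) * h z + h z) by ring,
        Complex.exp_add]
      ring
    simpa only [heq] using hre z hz
  -- derivatives of q at 0
  have hAa : AnalyticAt ℂ (fun z => 1 + z * deriv h z) 0 :=
    analyticAt_const.add (analyticAt_id.mul (myAnalyticAt_deriv hha))
  have hBa : AnalyticAt ℂ (fun z => Complex.exp ((α:ℂ) * h z)) 0 :=
    (analyticAt_const.mul hha).cexp
  have hA0 : (1 + (0:ℂ) * deriv h 0) = 1 := by simp
  have hB0 : Complex.exp ((α:ℂ) * h 0) = 1 := by rw [hh0]; simp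
  have hdA : deriv (fun z => 1 + z * deriv h z) 0 = H1 := by
    have h1 : HasDerivAt (fun z : ℂ => 1 + z * deriv h z)
        (1 * deriv h 0 + 0 * deriv (deriv h) 0) 0 :=
      ((hasDerivAt_id 0).mul (myAnalyticAt_deriv hha).differentiableAt.hasDerivAt).const_add 1
    rw [h1.deriv]; simp [hH1]
  have hi2A : iteratedDeriv 2 (fun z => 1 + z * deriv h z) 0 = 2 * H2 := by
    have hadd := add_deriv2 (A := fun _ => (1:ℂ))
      (B := fun z => z * deriv h z) analyticAt_const
      (analyticAt_id.mul (myAnalyticAt_deriv hha))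
    have hcst : iteratedDeriv 2 (fun _ : ℂ => (1:ℂ)) 0 = 0 := by
      rw [deriv2_eq]; simp
    rw [hadd, hcst, zmul_deriv2 (myAnalyticAt_deriv hha), ← hH2', zero_add]
  have hdv : deriv (fun z => (α:ℂ) * h z) 0 = (α:ℂ) * H1 :=
    deriv_const_mul _ hha.differentiableAt
  have hi2v : iteratedDeriv 2 (fun z => (α:ℂ) * h z) 0 = (α:ℂ) * H2 :=
    cm_deriv2 hha
  have hdB : deriv (fun z => Complex.exp ((α:ℂ) * h z)) 0 = (α:ℂ) * H1 := by
    rw [deriv_cexp (analyticAt_const.fun_mul hha).differentiableAt, hB0, hdv, one_mul]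
  have hi2B : iteratedDeriv 2 (fun z => Complex.exp ((α:ℂ) * h z)) 0
      = ((α:ℂ) * H1) ^ 2 + (α:ℂ) * H2 := by
    rw [cexp_deriv2 (analyticAt_const.fun_mul hha), hB0, hdv, hi2v, one_mul]
  have hdq : deriv (fun z => (1 + z * deriv h z) * Complex.exp ((α:ℂ) * h z)) 0
      = ((α:ℂ) + 1) * H1 := by
    rw [deriv_fun_mul hAa.differentiableAt hBa.differentiableAt, hdA, hdB, hA0, hB0]
    ring
  have hi2q : iteratedDeriv 2 (fun z => (1 + z * deriv h z) * Complex.exp ((α:ℂ) * h z)) 0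
      = ((α:ℂ) + 2) * H2 + ((α:ℂ) ^ 2 + 2 * (α:ℂ)) * H1 ^ 2 := by
    rw [mul_deriv2 hAa hBa, hi2A, hdA, hdB, hi2B, hA0, hB0]
    ring
  -- apply Carathéodory
  have hcar := carath hqA hq0 hre'
  rw [hdq, hi2q] at hcar
  have hkey : (((α:ℂ) + 2) * H2 + ((α:ℂ) ^ 2 + 2 * (α:ℂ)) * H1 ^ 2) / 2
      - (((α:ℂ) + 1) * H1) ^ 2 / 2 = (((α:ℂ) + 2) * H2 - H1 ^ 2) / 2 := by
    ring
  rw [hkey] at hcar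
  -- real arithmetic
  have habs1 : ‖((α:ℂ) + 1) * H1‖ = (α + 1) * ‖H1‖ := by
    rw [norm_mul]
    congr 1
    rw [show ((α:ℂ) + 1) = ((α + 1 : ℝ) : ℂ) by push_cast; ring, Complex.norm_real, Real.norm_eq_abs,
      abs_of_pos (by linarith)]
  have habs2 : ‖(((α:ℂ) + 2) * H2 - H1 ^ 2) / 2‖
      = ‖((α:ℂ) + 2) * H2 - H1 ^ 2‖ / 2 := by
    rw [norm_div, Complex.norm_two]
  have habs3 : ‖((α:ℂ) + 2) * H2‖ = (α + 2) * ‖H2‖ := by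
    rw [norm_mul]
    congr 1
    rw [show ((α:ℂ) + 2) = ((α + 2 : ℝ) : ℂ) by push_cast; ring, Complex.norm_real, Real.norm_eq_abs,
      abs_of_pos (by linarith)]
  have htri : ‖H1 ^ 2‖ ≤ ‖((α:ℂ) + 2) * H2‖
      + ‖((α:ℂ) + 2) * H2 - H1 ^ 2‖ := by
    have he : H1 ^ 2 = ((α:ℂ) + 2) * H2 - (((α:ℂ) + 2) * H2 - H1 ^ 2) := by ring
    calc ‖H1 ^ 2‖
        = ‖((α:ℂ) + 2) * H2 - (((α:ℂ) + 2) * H2 - H1 ^ 2)‖ := by rw [← he]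
      _ ≤ _ := by
          simpa only using
            norm_sub_le (((α:ℂ) + 2) * H2) (((α:ℂ) + 2) * H2 - H1 ^ 2)
  rw [habs2, habs1] at hcar
  rw [habs3, norm_pow] at htri
  have hfin : (1 + (α + 1) ^ 2) * ‖H1‖ ^ 2 - 4 ≤ (α + 2) * ‖H2‖ := by
    nlinarith [hcar, htri, norm_nonneg H1, norm_nonneg H2]
  rw [ge_iff_le, hLHS, hc2, norm_div, Complex.norm_two]
  have h2pos : (0:ℝ) < α + 2 := by linarith
  calc ((α + 1) ^ 2 + 1) / (2 * (α + 2)) * ‖H1‖ ^ 2 - 2 / (α + 2)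
      = ((1 + (α + 1) ^ 2) * ‖H1‖ ^ 2 - 4) / (2 * (α + 2)) := by
        field_simp
        ring
    _ ≤ ((α + 2) * ‖H2‖) / (2 * (α + 2)) := by gcongr
    _ = ‖H2‖ / 2 := by
        field_simp
end
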